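/- arXiv:math/0503650 — 9 statements merged into one kernel-verified Lean document; each statement's English description precedes it below -/
import Mathlib

section
/- Let p > 0, n ≥ 1, and let g_1,…,g_n be i.i.d. real random variables each with density t ↦ e^{-|t|^p}/(2Γ(1+1/p)). Then ∑_{i=1}^n |g_i|^p has a Gamma(n/p, 1) distribution, i.e. its density on (0,∞) is u ↦ u^{n/p-1} e^{-u}/Γ(n/p). -/
open MeasureTheory

section Stmt1Aux

open Real Set
open scoped ENNReal


noncomputable def gpdf (a : ℝ) (u : ℝ) : ℝ≥0∞ :=
  if 0 < u then ENNReal.ofReal (u ^ (a - 1) * Real.exp (-u) / Real.Gamma a) else 0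

noncomputable def gmeas (a : ℝ) : Measure ℝ := volume.withDensity (gpdf a)

lemma measurable_gpdf (a : ℝ) : Measurable (gpdf a) := by
  unfold gpdf
  exact Measurable.ite measurableSet_Ioi (by fun_prop) measurable_const

lemma lintegral_image_deriv {s : Set ℝ} {f f' : ℝ → ℝ} (hs : MeasurableSet s)
    (hf' : ∀ x ∈ s, HasDerivWithinAt f (f' x) s x) (hf : InjOn f s) (g : ℝ → ℝ≥0∞) :
    ∫⁻ x in f '' s, g x = ∫⁻ x in s, ENNReal.ofReal |f' x| * g (f x) := by
  rw [lintegral_image_eq_lintegral_abs_det_fderiv_mul volume hs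
    (fun x hx => (hf' x hx).hasFDerivWithinAt) hf g]
  simp only [ContinuousLinearMap.det_toSpanSingleton]

lemma gpdf_off (a : ℝ) {u : ℝ} (hu : ¬ 0 < u) : gpdf a u = 0 := by simp [gpdf, hu]

lemma setLIntegral_gpdf (a : ℝ) {s : Set ℝ} (hs : MeasurableSet s) :
    ∫⁻ u in s, gpdf a u = ∫⁻ u in Ioi 0, s.indicator (gpdf a) u := by
  classical
  have h1 : ∀ u : ℝ, s.indicator (gpdf a) u = ((Ioi 0) ∩ s).indicator (gpdf a) u := by
    intro u
    rw [Set.indicator_apply, Set.indicator_apply]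
    by_cases hu : 0 < u
    · simp [mem_inter_iff, mem_Ioi, hu]
    · by_cases hus : u ∈ s <;> simp [mem_inter_iff, mem_Ioi, hu, hus, gpdf_off a hu]
  calc ∫⁻ u in s, gpdf a u = ∫⁻ u, s.indicator (gpdf a) u := (lintegral_indicator hs _).symm
    _ = ∫⁻ u, ((Ioi 0) ∩ s).indicator (gpdf a) u := lintegral_congr h1
    _ = ∫⁻ u in Ioi 0 ∩ s, gpdf a u := lintegral_indicator (measurableSet_Ioi.inter hs) _
    _ = ∫⁻ u in Ioi 0, s.indicator (gpdf a) u := by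
        rw [lintegral_indicator hs, Measure.restrict_restrict hs, inter_comm]

lemma mapAbsRpow {p : ℝ} (hp : 0 < p) :
    Measure.map (fun t : ℝ => |t| ^ p)
      (volume.withDensity fun t : ℝ =>
        ENNReal.ofReal (Real.exp (-|t| ^ p) / (2 * Real.Gamma (1 + 1 / p)))) = gmeas (1 / p) := by
  classical
  have hpne : p ≠ 0 := hp.ne'
  have hGamma1 : 0 < Real.Gamma (1 + 1 / p) := Real.Gamma_pos_of_pos (by positivity)
  have hGammap : 0 < Real.Gamma (1 / p) := Real.Gamma_pos_of_pos (by positivity)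
  have hmeas : Measurable fun t : ℝ => |t| ^ p := by fun_prop
  ext s hs
  rw [Measure.map_apply hmeas hs, withDensity_apply _ (hmeas hs), gmeas, withDensity_apply _ hs]
  set F : ℝ → ℝ≥0∞ := fun t => ENNReal.ofReal (Real.exp (-|t| ^ p) / (2 * Real.Gamma (1 + 1 / p)))
    with hF
  have hFmeas : Measurable F := by fun_prop
  set A : Set ℝ := (fun t : ℝ => |t| ^ p) ⁻¹' s with hA
  have hAmeas : MeasurableSet A := hmeas hs
  set K : ℝ → ℝ≥0∞ := A.indicator F with hK
  have hKmeas : Measurable K := hFmeas.indicator hAmeas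
  have hKeven : ∀ t, K (-t) = K t := by
    intro t
    rw [hK, Set.indicator_apply, Set.indicator_apply]
    simp only [hA, hF, Set.mem_preimage, abs_neg]
  rw [← lintegral_indicator hAmeas, ← hK]
  have hsplit : ∫⁻ t, K t = (∫⁻ t in Iio 0, K t) + ∫⁻ t in Ici 0, K t := by
    rw [← compl_Iio (a := (0:ℝ)), lintegral_add_compl _ measurableSet_Iio]
  have hneg : ∫⁻ t in Iio 0, K t = ∫⁻ t in Ioi 0, K t := by
    have h1 : (volume : Measure ℝ).restrict (Iio 0) =
        Measure.map Neg.neg ((volume : Measure ℝ).restrict (Ioi 0)) := by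
      conv_lhs => rw [← Measure.map_neg_eq_self (volume : Measure ℝ)]
      rw [Measure.restrict_map measurable_neg measurableSet_Iio]
      congr 1
      ext t
      simp
    rw [h1, lintegral_map hKmeas measurable_neg]
    exact lintegral_congr fun t => hKeven t
  have hIci : ∫⁻ t in Ici 0, K t = ∫⁻ t in Ioi 0, K t := by
    rw [MeasureTheory.restrict_Ioi_eq_restrict_Ici]
  set G : ℝ → ℝ≥0∞ :=
    s.indicator fun u => ENNReal.ofReal (Real.exp (-u) / (2 * Real.Gamma (1 + 1 / p))) with hG
  have hGmeas : Measurable G := Measurable.indicator (by fun_prop) hs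
  have hpos : ∫⁻ t in Ioi 0, K t = ∫⁻ t in Ioi 0, G (t ^ p) := by
    refine setLIntegral_congr_fun measurableSet_Ioi (fun t ht => ?_)
    rw [hK, hG, Set.indicator_apply, Set.indicator_apply]
    simp only [hA, hF, Set.mem_preimage, abs_of_pos (mem_Ioi.mp ht)]
  have hppow : ∀ z : ℝ, 0 < z → (z ^ (1 / p)) ^ p = z := by
    intro z hz
    rw [← Real.rpow_mul hz.le, one_div_mul_cancel hpne, Real.rpow_one]
  have himg : (fun u : ℝ => u ^ (1 / p)) '' Ioi 0 = Ioi 0 := by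
    ext y
    constructor
    · rintro ⟨x, hx, rfl⟩
      exact rpow_pos_of_pos hx _
    · intro hy
      refine ⟨y ^ p, rpow_pos_of_pos hy _, ?_⟩
      show (y ^ p) ^ (1 / p) = y
      rw [← Real.rpow_mul (le_of_lt hy), mul_one_div, div_self hpne, Real.rpow_one]
  have hder : ∀ u ∈ Ioi (0:ℝ), HasDerivWithinAt (fun u : ℝ => u ^ (1 / p))
      ((1 / p) * u ^ (1 / p - 1)) (Ioi 0) u := fun u hu =>
    (Real.hasDerivAt_rpow_const (Or.inl (ne_of_gt (mem_Ioi.mp hu)))).hasDerivWithinAt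
  have hinj : InjOn (fun u : ℝ => u ^ (1 / p)) (Ioi 0) := by
    intro x hx y hy hxy
    have hxy' : x ^ (1 / p) = y ^ (1 / p) := hxy
    calc x = (x ^ (1 / p)) ^ p := (hppow x (mem_Ioi.mp hx)).symm
      _ = (y ^ (1 / p)) ^ p := by rw [hxy']
      _ = y := hppow y (mem_Ioi.mp hy)
  have hchg : ∫⁻ t in Ioi 0, G (t ^ p) =
      ∫⁻ u in Ioi 0, ENNReal.ofReal (1 / p * u ^ (1 / p - 1)) * G u := by
    conv_lhs => rw [← himg]
    rw [lintegral_image_deriv measurableSet_Ioi hder hinj fun t => G (t ^ p)]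
    refine setLIntegral_congr_fun measurableSet_Ioi (fun u hu => ?_)
    have hu0 := mem_Ioi.mp hu
    rw [hppow u hu0, abs_of_pos (mul_pos (by positivity) (Real.rpow_pos_of_pos hu0 _))]
  -- now assemble
  rw [hsplit, hneg, hIci, hpos, hchg, ← lintegral_add_left (by fun_prop),
    setLIntegral_gpdf _ hs]
  refine setLIntegral_congr_fun measurableSet_Ioi (fun u hu => ?_)
  have hu0 : (0:ℝ) < u := mem_Ioi.mp hu
  rw [hG, Set.indicator_apply, Set.indicator_apply]
  by_cases hus : u ∈ s
  · simp only [hus, if_pos, gpdf, hu0, if_true]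
    rw [← ENNReal.ofReal_mul (by positivity), ← ENNReal.ofReal_add (by positivity) (by positivity)]
    congr 1
    have hG1 : Real.Gamma (1 + 1 / p) = (1 / p) * Real.Gamma (1 / p) := by
      rw [add_comm, Real.Gamma_add_one (by positivity)]
    rw [hG1]
    field_simp
    ring
  · simp [hus]

lemma beta_integrable_half {a b u : ℝ} (ha : 0 < a) (hb : 0 < b) (hu : 0 < u) :
    IntervalIntegrable (fun x => x ^ (a - 1) * (u - x) ^ (b - 1)) volume 0 (u / 2) := by
  apply IntervalIntegrable.mul_continuousOn
  · exact intervalIntegral.intervalIntegrable_rpow' (by linarith)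
  · intro x hx
    rw [uIcc_of_le (by linarith : (0:ℝ) ≤ u / 2)] at hx
    have hux : (0:ℝ) < u - x := by
      have := hx.2
      linarith
    exact ((continuous_const.sub continuous_id).continuousAt.rpow_const
      (Or.inl hux.ne')).continuousWithinAt

lemma beta_integrable {a b u : ℝ} (ha : 0 < a) (hb : 0 < b) (hu : 0 < u) :
    IntervalIntegrable (fun x => x ^ (a - 1) * (u - x) ^ (b - 1)) volume 0 u := by
  refine (beta_integrable_half ha hb hu).trans ?_
  have h2 := (beta_integrable_half hb ha hu).comp_sub_left u
  have he : ∀ x : ℝ, (u - x) ^ (b - 1) * (u - (u - x)) ^ (a - 1)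
      = x ^ (a - 1) * (u - x) ^ (b - 1) := by
    intro x
    rw [sub_sub_cancel]
    ring
  simp only [he] at h2
  have hb1 : u - u / 2 = u / 2 := by ring
  have hb2 : u - 0 = u := by ring
  rw [hb1, hb2] at h2
  exact h2.symm

lemma beta_real {a b u : ℝ} (ha : 0 < a) (hb : 0 < b) (hu : 0 < u) :
    ∫ x in (0:ℝ)..u, x ^ (a - 1) * (u - x) ^ (b - 1)
      = u ^ (a + b - 1) * (Real.Gamma a * Real.Gamma b / Real.Gamma (a + b)) := by
  have hGab : Real.Gamma (a + b) ≠ 0 := (Real.Gamma_pos_of_pos (by linarith)).ne'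
  have hbeta : Complex.betaIntegral a b
      = ((Real.Gamma a * Real.Gamma b / Real.Gamma (a + b) : ℝ) : ℂ) := by
    have h := Complex.Gamma_mul_Gamma_eq_betaIntegral
      (s := (a : ℂ)) (t := (b : ℂ)) (by simpa using ha) (by simpa using hb)
    rw [show ((a : ℂ) + b) = ((a + b : ℝ) : ℂ) by push_cast; ring] at h
    rw [Complex.Gamma_ofReal, Complex.Gamma_ofReal, Complex.Gamma_ofReal] at h
    have hne : ((Real.Gamma (a + b) : ℝ) : ℂ) ≠ 0 := by
      simpa using hGab
    field_simp
    rw [Complex.ofReal_div, Complex.ofReal_mul, h, mul_div_cancel_left₀ _ hne]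
  have hscaled := Complex.betaIntegral_scaled (a : ℂ) (b : ℂ) hu
  have hlhs : ∫ x in (0:ℝ)..u, ((x : ℂ)) ^ ((a:ℂ) - 1) * ((u:ℂ) - x) ^ ((b:ℂ) - 1)
      = ((∫ x in (0:ℝ)..u, x ^ (a - 1) * (u - x) ^ (b - 1) : ℝ) : ℂ) := by
    rw [← intervalIntegral.integral_ofReal]
    refine intervalIntegral.integral_congr fun x hx => ?_
    rw [uIcc_of_le hu.le] at hx
    rw [Complex.ofReal_mul, Complex.ofReal_cpow hx.1 (a - 1),
      Complex.ofReal_cpow (by linarith [hx.2] : (0:ℝ) ≤ u - x) (b - 1)]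
    push_cast
    ring
  rw [hlhs, hbeta] at hscaled
  have hupow : ((u:ℂ)) ^ ((a:ℂ) + b - 1) = ((u ^ (a + b - 1) : ℝ) : ℂ) := by
    rw [Complex.ofReal_cpow hu.le]
    push_cast
    ring_nf
  rw [hupow, ← Complex.ofReal_mul] at hscaled
  exact_mod_cast hscaled

lemma gpdf_conv {a b : ℝ} (ha : 0 < a) (hb : 0 < b) (u : ℝ) :
    ∫⁻ x, gpdf a x * gpdf b (u - x) = gpdf (a + b) u := by
  classical
  have hGa : 0 < Real.Gamma a := Real.Gamma_pos_of_pos ha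
  have hGb : 0 < Real.Gamma b := Real.Gamma_pos_of_pos hb
  have hGab : 0 < Real.Gamma (a + b) := Real.Gamma_pos_of_pos (by linarith)
  by_cases hu : 0 < u
  · set c : ℝ := Real.exp (-u) / (Real.Gamma a * Real.Gamma b) with hc
    set ψ : ℝ → ℝ := fun x => x ^ (a - 1) * (u - x) ^ (b - 1) with hψ
    have hind : ∀ x, gpdf a x * gpdf b (u - x)
        = (Ioo 0 u).indicator (fun x => ENNReal.ofReal (ψ x * c)) x := by
      intro x
      rw [Set.indicator_apply]
      by_cases hx1 : 0 < x
      · by_cases hx2 : x < u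
        · rw [if_pos (mem_Ioo.mpr ⟨hx1, hx2⟩)]
          rw [gpdf, gpdf, if_pos hx1, if_pos (by linarith : 0 < u - x)]
          rw [← ENNReal.ofReal_mul (by positivity)]
          congr 1
          have hexp : Real.exp (-x) * Real.exp (-(u - x)) = Real.exp (-u) := by
            rw [← Real.exp_add]; ring_nf
          rw [hψ, hc, ← hexp]
          field_simp
        · rw [if_neg (fun hmem => hx2 (mem_Ioo.mp hmem).2),
            gpdf_off b (by intro h; exact hx2 (by linarith)), mul_zero]
      · rw [if_neg (fun hmem => hx1 (mem_Ioo.mp hmem).1), gpdf_off a hx1, zero_mul]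
    simp_rw [hind]
    rw [lintegral_indicator measurableSet_Ioo]
    have hint : IntegrableOn (fun x => ψ x * c) (Ioo 0 u) := by
      have h1 : IntegrableOn ψ (Ioc 0 u) := by
        have := beta_integrable ha hb hu
        rwa [intervalIntegrable_iff_integrableOn_Ioc_of_le hu.le] at this
      exact ((h1.mono_set Ioo_subset_Ioc_self).mul_const c)
    rw [← ofReal_integral_eq_lintegral_ofReal hint]
    · rw [MeasureTheory.integral_mul_const, ← integral_Ioc_eq_integral_Ioo,
        ← intervalIntegral.integral_of_le hu.le, beta_real ha hb hu, gpdf, if_pos hu]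
      congr 1
      rw [hc, mul_assoc, div_mul_div_comm,
        mul_comm (Real.Gamma (a + b)) (Real.Gamma a * Real.Gamma b),
        mul_div_mul_left _ _ (by positivity : Real.Gamma a * Real.Gamma b ≠ 0), mul_div_assoc]
    · filter_upwards [self_mem_ae_restrict measurableSet_Ioo] with x hx
      have hx1 := (mem_Ioo.mp hx).1
      have hx2 := (mem_Ioo.mp hx).2
      have : 0 ≤ ψ x := by
        rw [hψ]
        have : (0:ℝ) ≤ u - x := by linarith
        positivity
      rw [hc]
      positivity
  · have h0 : ∀ x, gpdf a x * gpdf b (u - x) = 0 := by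
      intro x
      by_cases hx : 0 < x
      · rw [gpdf_off b (by intro h; exact hu (by linarith)), mul_zero]
      · rw [gpdf_off a hx, zero_mul]
    simp_rw [h0, lintegral_zero, gpdf_off (a + b) hu]

lemma gpdf_ne_top (a : ℝ) (u : ℝ) : gpdf a u ≠ ⊤ := by
  unfold gpdf
  split <;> simp

instance gmeas_sfinite (a : ℝ) : SFinite (gmeas a) := by
  unfold gmeas; infer_instance

lemma map_add_gmeas {a b : ℝ} (ha : 0 < a) (hb : 0 < b) :
    Measure.map (fun z : ℝ × ℝ => z.1 + z.2) ((gmeas a).prod (gmeas b)) = gmeas (a + b) := by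
  classical
  ext s hs
  have haddmeas : Measurable fun z : ℝ × ℝ => z.1 + z.2 := by fun_prop
  rw [Measure.map_apply haddmeas hs]
  rw [Measure.prod_apply (haddmeas hs)]
  set I : ℝ → ℝ≥0∞ := s.indicator 1 with hI
  have hImeas : Measurable I := (measurable_const.indicator hs)
  have hinner : ∀ x : ℝ, gmeas b (Prod.mk x ⁻¹' ((fun z : ℝ × ℝ => z.1 + z.2) ⁻¹' s))
      = ∫⁻ v, I v * gpdf b (v - x) := by
    intro x
    have hpre : (Prod.mk x ⁻¹' ((fun z : ℝ × ℝ => z.1 + z.2) ⁻¹' s))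
        = (fun y : ℝ => x + y) ⁻¹' s := rfl
    rw [hpre, gmeas, withDensity_apply _ ((measurable_const_add x) hs),
      ← lintegral_indicator ((measurable_const_add x) hs)]
    have h1 : ∀ y : ℝ, ((fun y : ℝ => x + y) ⁻¹' s).indicator (gpdf b) y
        = I (x + y) * gpdf b (x + y - x) := by
      intro y
      rw [add_sub_cancel_left, hI, Set.indicator_apply, Set.indicator_apply, Set.mem_preimage]
      by_cases h : x + y ∈ s <;> simp [h]
    simp_rw [h1]
    exact lintegral_add_left_eq_self (fun v => I v * gpdf b (v - x)) x
  simp_rw [hinner]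
  rw [gmeas, lintegral_withDensity_eq_lintegral_mul _ (measurable_gpdf a)
    (Measurable.lintegral_prod_right' (f := fun q : ℝ × ℝ => I q.2 * gpdf b (q.2 - q.1))
      ((hImeas.comp measurable_snd).mul ((measurable_gpdf b).comp (measurable_snd.sub measurable_fst))))]
  simp only [Pi.mul_apply]
  have hswap : ∫⁻ x, gpdf a x * ∫⁻ v, I v * gpdf b (v - x)
      = ∫⁻ v, I v * ∫⁻ x, gpdf a x * gpdf b (v - x) := by
    calc ∫⁻ x, gpdf a x * ∫⁻ v, I v * gpdf b (v - x)
        = ∫⁻ x, ∫⁻ v, gpdf a x * (I v * gpdf b (v - x)) := by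
          refine lintegral_congr fun x => ?_
          rw [← lintegral_const_mul' _ _ (gpdf_ne_top a x)]
      _ = ∫⁻ v, ∫⁻ x, gpdf a x * (I v * gpdf b (v - x)) := by
          apply lintegral_lintegral_swap
          apply Measurable.aemeasurable
          exact ((measurable_gpdf a).comp measurable_fst).mul
            ((hImeas.comp measurable_snd).mul
              ((measurable_gpdf b).comp (measurable_snd.sub measurable_fst)))
      _ = ∫⁻ v, I v * ∫⁻ x, gpdf a x * gpdf b (v - x) := by
          refine lintegral_congr fun v => ?_
          have hIne : I v ≠ ⊤ := by
            rw [hI, Set.indicator_apply]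
            split <;> simp
          rw [← lintegral_const_mul' _ _ hIne]
          refine lintegral_congr fun x => ?_
          ring
  rw [hswap]
  have hfinal : ∀ v, I v * ∫⁻ x, gpdf a x * gpdf b (v - x) = s.indicator (gpdf (a + b)) v := by
    intro v
    rw [gpdf_conv ha hb v, hI, Set.indicator_apply, Set.indicator_apply]
    by_cases h : v ∈ s <;> simp [h]
  simp_rw [hfinal]
  rw [lintegral_indicator hs, gmeas, withDensity_apply _ hs]

lemma key {p : ℝ} (hp : 0 < p) :
    ∀ n : ℕ, 1 ≤ n →
    Measure.map (fun x : Fin n → ℝ => ∑ i, |x i| ^ p)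
      (Measure.pi fun _ : Fin n => volume.withDensity fun t : ℝ =>
        ENNReal.ofReal (Real.exp (-|t| ^ p) / (2 * Real.Gamma (1 + 1 / p))))
      = gmeas (n / p) := by
  set f : ℝ → ℝ≥0∞ := fun t => ENNReal.ofReal (Real.exp (-|t| ^ p) / (2 * Real.Gamma (1 + 1 / p)))
    with hf
  have hfmeas : Measurable f := by fun_prop
  set μ : Measure ℝ := volume.withDensity f with hμ
  haveI : SigmaFinite μ :=
    SigmaFinite.withDensity_of_ne_top (Filter.Eventually.of_forall fun x => by simp [hf])
  have hSmeas : ∀ m : ℕ, Measurable (fun x : Fin m → ℝ => ∑ i, |x i| ^ p) := by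
    intro m
    apply Finset.measurable_sum
    intro i _
    fun_prop
  have habs : Measurable fun t : ℝ => |t| ^ p := by fun_prop
  intro n
  induction n with
  | zero => omega
  | succ n ih =>
    intro _
    rcases Nat.eq_zero_or_pos n with rfl | hn1
    · -- n + 1 = 1
      have he := (measurePreserving_funUnique μ (Fin 1)).symm
      show Measure.map (fun x : Fin 1 → ℝ => ∑ i, |x i| ^ p) (Measure.pi fun _ : Fin 1 => μ) = _
      rw [show (Measure.pi fun _ : Fin 1 => μ) = _ from he.map_eq.symm, Measure.map_map (hSmeas 1) he.measurable]
      have hcomp : (fun x : Fin 1 → ℝ => ∑ i, |x i| ^ p) ∘ (MeasurableEquiv.funUnique (Fin 1) ℝ).symm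
          = fun t : ℝ => |t| ^ p := by
        funext t
        simp [Fin.sum_univ_one, MeasurableEquiv.funUnique]
      rw [hcomp, hμ, hf, mapAbsRpow hp]
      norm_num
    · have hprev := ih hn1
      set e := MeasurableEquiv.piFinSuccAbove (fun _ : Fin (n + 1) => ℝ) 0 with hedef
      have hmp := (measurePreserving_piFinSuccAbove (fun _ : Fin (n + 1) => μ) 0).symm
      have hpiprod : (μ.prod (Measure.pi fun _ : Fin n => μ)) =
          ((fun _ : Fin (n+1) => μ) 0).prod (Measure.pi fun j : Fin n => (fun _ : Fin (n+1) => μ) ((0 : Fin (n+1)).succAbove j)) := rfl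
      rw [← hmp.map_eq, Measure.map_map (hSmeas (n + 1)) hmp.measurable]
      have hcomp : (fun x : Fin (n + 1) → ℝ => ∑ i, |x i| ^ p) ∘ e.symm
          = (fun z : ℝ × ℝ => z.1 + z.2) ∘
            (Prod.map (fun y : ℝ => |y| ^ p) (fun z : Fin n → ℝ => ∑ i, |z i| ^ p)) := by
        funext q
        simp only [Function.comp_apply, hedef, MeasurableEquiv.piFinSuccAbove_symm_apply,
          Prod.map_apply]
        rw [Fin.sum_univ_succAbove _ 0]
        simp [Fin.insertNth_apply_same, Fin.insertNth_apply_succAbove]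
      rw [← hpiprod, hcomp, ← Measure.map_map (by fun_prop) (habs.prodMap (hSmeas n)),
        ← Measure.map_prod_map _ _ habs (hSmeas n), hμ, hf, mapAbsRpow hp, hprev,
        map_add_gmeas (by positivity) (by positivity)]
      congr 1
      push_cast
      field_simp
      ring


end Stmt1Aux

theorem stmt1 (p : ℝ) (hp : 0 < p) (n : ℕ) (hn : 1 ≤ n) :
    Measure.map (fun x : Fin n → ℝ => ∑ i, |x i| ^ p)
      (Measure.pi fun _ : Fin n => volume.withDensity fun t : ℝ =>
        ENNReal.ofReal (Real.exp (-|t| ^ p) / (2 * Real.Gamma (1 + 1 / p)))) =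
    volume.withDensity (fun u : ℝ =>
      if 0 < u then ENNReal.ofReal (u ^ ((n : ℝ) / p - 1) * Real.exp (-u) / Real.Gamma ((n : ℝ) / p))
      else 0) := by
  exact key hp n hn
end

section
/- Let p ≥ 1, q ≥ 1 and n ≥ 1. Then (1/vol(B_p^n)) ∫_{B_p^n} |x_1|^q dx = Γ(n/p+1) Γ((q+1)/p+1) / [(q+1) Γ(1/p+1) Γ((n+q)/p+1)]. -/
open MeasureTheory Set

lemma real_beta (a b : ℝ) (ha : 0 < a) (hb : 0 < b) :
    ∫ u in Ioc (0:ℝ) 1, u ^ (a-1) * (1-u) ^ (b-1) =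
      Real.Gamma a * Real.Gamma b / Real.Gamma (a+b) := by
  have key : Complex.betaIntegral a b =
      ((∫ u in (0:ℝ)..1, u ^ (a-1) * (1-u) ^ (b-1) : ℝ) : ℂ) := by
    rw [Complex.betaIntegral, ← intervalIntegral.integral_ofReal]
    refine intervalIntegral.integral_congr fun x hx => ?_
    rw [uIcc_of_le zero_le_one] at hx
    rw [show ((a:ℂ)-1) = ((a-1:ℝ):ℂ) by push_cast; ring,
      show ((b:ℂ)-1) = ((b-1:ℝ):ℂ) by push_cast; ring,
      show (1 - (x:ℂ)) = ((1-x:ℝ):ℂ) by push_cast; ring,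
      ← Complex.ofReal_cpow hx.1, ← Complex.ofReal_cpow (by linarith [hx.2]),
      ← Complex.ofReal_mul]
  have hG := Complex.Gamma_mul_Gamma_eq_betaIntegral
      (s := (a:ℂ)) (t := (b:ℂ)) (by simpa using ha) (by simpa using hb)
  rw [key] at hG
  rw [← Complex.ofReal_add, Complex.Gamma_ofReal, Complex.Gamma_ofReal,
    Complex.Gamma_ofReal, ← Complex.ofReal_mul, ← Complex.ofReal_mul] at hG
  have hG' := Complex.ofReal_inj.mp hG
  have hab : Real.Gamma (a+b) ≠ 0 := (Real.Gamma_pos_of_pos (by linarith)).ne'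
  rw [← intervalIntegral.integral_of_le zero_le_one]
  field_simp [hG']
  rw [hG']; ring

lemma vol_ball_c {p : ℝ} (hp : 1 ≤ p) (m : ℕ) {c : ℝ} (hc : 0 ≤ c) :
    volume {y : Fin m → ℝ | ∑ i, |y i| ^ p ≤ c} =
      ENNReal.ofReal (c ^ ((m:ℝ)/p) *
        ((2 * Real.Gamma (1/p+1)) ^ m / Real.Gamma ((m:ℝ)/p+1))) := by
  have hp0 : 0 < p := lt_of_lt_of_le one_pos hp
  rcases Nat.eq_zero_or_pos m with rfl | hm
  · have : {y : Fin 0 → ℝ | ∑ i, |y i| ^ p ≤ c} = univ := by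
      ext y; simp [hc]
    rw [this]
    simp only [Nat.cast_zero, zero_div, Real.rpow_zero, pow_zero, Real.Gamma_one, one_mul,
      div_one]
    rw [MeasureTheory.volume_pi, MeasureTheory.Measure.pi_univ]
    simp
  · have : Nonempty (Fin m) := Fin.pos_iff_nonempty.mp hm
    have hset : {y : Fin m → ℝ | ∑ i, |y i| ^ p ≤ c}
        = {y : Fin m → ℝ | (∑ i, |y i| ^ p) ^ (1/p) ≤ c ^ (1/p)} := by
      ext y
      have hs : (0:ℝ) ≤ ∑ i, |y i| ^ p :=
        Finset.sum_nonneg fun i _ => Real.rpow_nonneg (abs_nonneg _) _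
      simp only [mem_setOf_eq]
      constructor
      · exact fun h => Real.rpow_le_rpow hs h (by positivity)
      · intro h
        have := Real.rpow_le_rpow (Real.rpow_nonneg hs _) h hp0.le
        rwa [← Real.rpow_mul hs, ← Real.rpow_mul hc,
          one_div_mul_cancel hp0.ne', Real.rpow_one, Real.rpow_one] at this
    rw [hset, MeasureTheory.volume_sum_rpow_le _ hp]
    rw [← ENNReal.ofReal_pow (Real.rpow_nonneg hc _), ← ENNReal.ofReal_mul (by positivity)]
    congr 2
    · rw [← Real.rpow_natCast (c ^ (1/p)), ← Real.rpow_mul hc]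
      rw [Fintype.card_fin]
      ring_nf
    · simp [Fintype.card_fin]

theorem stmt3 (p q : ℝ) (hp : 1 ≤ p) (hq : 1 ≤ q) (n : ℕ) (hn : 0 < n) :
    (∫ x in {x : Fin n → ℝ | ∑ i, |x i| ^ p ≤ 1}, |x ⟨0, hn⟩| ^ q) /
      (volume {x : Fin n → ℝ | ∑ i, |x i| ^ p ≤ 1}).toReal =
    Real.Gamma ((n : ℝ) / p + 1) * Real.Gamma ((q + 1) / p + 1) /
      ((q + 1) * Real.Gamma (1 / p + 1) * Real.Gamma (((n : ℝ) + q) / p + 1)) := by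
  obtain ⟨m, rfl⟩ : ∃ m, n = m + 1 := ⟨n - 1, (Nat.succ_pred_eq_of_pos hn).symm⟩
  have hp0 : 0 < p := lt_of_lt_of_le one_pos hp
  have hq0 : 0 < q := lt_of_lt_of_le one_pos hq
  set Vm : ℝ := (2 * Real.Gamma (1/p+1)) ^ m / Real.Gamma ((m:ℝ)/p+1) with hVm_def
  set Vn : ℝ := (2 * Real.Gamma (1/p+1)) ^ (m+1) / Real.Gamma (((m:ℕ)+1:ℝ)/p+1) with hVn_def
  have hG1 : 0 < Real.Gamma (1/p+1) := Real.Gamma_pos_of_pos (by positivity)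
  have hGm : 0 < Real.Gamma ((m:ℝ)/p+1) := Real.Gamma_pos_of_pos (by positivity)
  have hGn : 0 < Real.Gamma (((m:ℕ)+1:ℝ)/p+1) := Real.Gamma_pos_of_pos (by positivity)
  have hVm : 0 < Vm := by positivity
  have hVn : 0 < Vn := by positivity
  set S := {x : Fin (m+1) → ℝ | ∑ i, |x i| ^ p ≤ 1} with hS_def
  have h1d : ∀ r : ℝ, 0 ≤ r → Measurable fun t : ℝ => |t| ^ r := fun r hr =>
    (continuous_abs.rpow_const fun _ => Or.inr hr).measurable
  have hsum_meas' : ∀ (k : ℕ), Measurable fun y : Fin k → ℝ => ∑ i, |y i| ^ p :=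
    fun k => Finset.measurable_sum _ fun i _ => (h1d p hp0.le).comp (measurable_pi_apply i)
  have hS_meas : MeasurableSet S := measurableSet_le (hsum_meas' (m+1)) measurable_const
  have hvolS : volume S = ENNReal.ofReal Vn := by
    rw [hS_def, vol_ball_c hp (m+1) (zero_le_one (α := ℝ))]
    rw [Real.one_rpow, one_mul, hVn_def]
    norm_num
  have hsum_meas := hsum_meas' m
  set T : Set (ℝ × (Fin m → ℝ)) := {z | |z.1| ^ p + ∑ i, |z.2 i| ^ p ≤ 1} with hT_def
  have hT_meas : MeasurableSet T := by
    apply measurableSet_le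
    · exact ((h1d p hp0.le).comp measurable_fst).add (hsum_meas.comp measurable_snd)
    · exact measurable_const
  have hGmeas : Measurable (T.indicator fun z : ℝ × (Fin m → ℝ) =>
      ENNReal.ofReal (|z.1| ^ q)) :=
    Measurable.indicator (((h1d q hq0.le).comp measurable_fst).ennreal_ofReal) hT_meas
  have step1 : ∫⁻ x in S, ENNReal.ofReal (|x ⟨0, hn⟩| ^ q) =
      ∫⁻ z in T, ENNReal.ofReal (|z.1| ^ q) := by
    have he := volume_preserving_piFinSuccAbove (fun _ : Fin (m+1) => ℝ) 0
    rw [← lintegral_indicator hS_meas, ← lintegral_indicator hT_meas,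
      ← he.lintegral_comp hGmeas]
    congr 1 with x
    have hmem : (MeasurableEquiv.piFinSuccAbove (fun _ : Fin (m+1) => ℝ) 0) x ∈ T ↔ x ∈ S := by
      simp only [MeasurableEquiv.piFinSuccAbove_apply, hT_def, hS_def, mem_setOf_eq,
        Fin.insertNthEquiv_symm_apply, Fin.removeNth]
      rw [Fin.sum_univ_succAbove (fun i => |x i| ^ p) 0]
    by_cases hx : x ∈ S
    · rw [indicator_of_mem (hmem.mpr hx), indicator_of_mem hx]
      rfl
    · rw [indicator_of_notMem (fun h => hx (hmem.mp h)), indicator_of_notMem hx]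
  have step2 : ∫⁻ z in T, ENNReal.ofReal (|z.1| ^ q) =
      ∫⁻ t in Icc (-1:ℝ) 1,
        ENNReal.ofReal (|t| ^ q * ((1 - |t| ^ p) ^ ((m:ℝ)/p) * Vm)) := by
    rw [← lintegral_indicator hT_meas, Measure.volume_eq_prod, lintegral_prod _ hGmeas.aemeasurable]
    have inner : ∀ t : ℝ, (∫⁻ y, T.indicator (fun z => ENNReal.ofReal (|z.1| ^ q)) (t, y)) =
        ENNReal.ofReal (|t| ^ q) * volume {y : Fin m → ℝ | ∑ i, |y i| ^ p ≤ 1 - |t| ^ p} := by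
      intro t
      have hmeasA : MeasurableSet {y : Fin m → ℝ | ∑ i, |y i| ^ p ≤ 1 - |t| ^ p} :=
        measurableSet_le hsum_meas measurable_const
      have hpt : ∀ y : Fin m → ℝ, T.indicator (fun z => ENNReal.ofReal (|z.1| ^ q)) (t, y) =
          ({y : Fin m → ℝ | ∑ i, |y i| ^ p ≤ 1 - |t| ^ p}).indicator
            (fun _ => ENNReal.ofReal (|t| ^ q)) y := by
        intro y
        have : (t, y) ∈ T ↔ y ∈ {y : Fin m → ℝ | ∑ i, |y i| ^ p ≤ 1 - |t| ^ p} := by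
          simp only [hT_def, mem_setOf_eq]
          constructor <;> intro h <;> linarith
        by_cases hy : (t, y) ∈ T
        · rw [indicator_of_mem hy, indicator_of_mem (this.mp hy)]
        · rw [indicator_of_notMem hy, indicator_of_notMem (fun h => hy (this.mpr h))]
      simp_rw [hpt]
      rw [lintegral_indicator hmeasA, setLIntegral_const]
    simp_rw [inner]
    have hsec : ∀ t : ℝ,
        ENNReal.ofReal (|t| ^ q) * volume {y : Fin m → ℝ | ∑ i, |y i| ^ p ≤ 1 - |t| ^ p} =
        (Icc (-1:ℝ) 1).indicator
          (fun t => ENNReal.ofReal (|t| ^ q * ((1 - |t| ^ p) ^ ((m:ℝ)/p) * Vm))) t := by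
      intro t
      have habs : t ∈ Icc (-1:ℝ) 1 ↔ |t| ≤ 1 := abs_le.symm
      by_cases ht : |t| ≤ 1
      · have hc : (0:ℝ) ≤ 1 - |t| ^ p :=
          sub_nonneg.mpr (Real.rpow_le_one (abs_nonneg t) ht hp0.le)
        rw [vol_ball_c hp m hc, indicator_of_mem (habs.mpr ht),
          ← ENNReal.ofReal_mul (by positivity)]
      · have h1 : 1 < |t| := not_le.mp ht
        have hc : 1 - |t| ^ p < 0 := by
          have : 1 < |t| ^ p :=
            (Real.one_lt_rpow_iff_of_pos (by linarith)).mpr (Or.inl ⟨h1, hp0⟩)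
          linarith
        have hempty : {y : Fin m → ℝ | ∑ i, |y i| ^ p ≤ 1 - |t| ^ p} = ∅ := by
          ext y
          simp only [mem_setOf_eq, mem_empty_iff_false, iff_false, not_le]
          calc 1 - |t| ^ p < 0 := hc
            _ ≤ ∑ i, |y i| ^ p :=
              Finset.sum_nonneg fun i _ => Real.rpow_nonneg (abs_nonneg _) _
        rw [hempty, measure_empty, mul_zero,
          indicator_of_notMem (fun h => ht (habs.mp h))]
    simp_rw [hsec]
    rw [lintegral_indicator measurableSet_Icc]
  have hf_nonneg : ∀ x : Fin (m+1) → ℝ, 0 ≤ |x ⟨0, hn⟩| ^ q :=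
    fun x => Real.rpow_nonneg (abs_nonneg _) _
  have hf_meas : Measurable fun x : Fin (m+1) → ℝ => |x ⟨0, hn⟩| ^ q :=
    (h1d q hq0.le).comp (measurable_pi_apply _)
  have hintS : IntegrableOn (fun x : Fin (m+1) → ℝ => |x ⟨0, hn⟩| ^ q) S := by
    apply Measure.integrableOn_of_bounded (M := 1)
    · rw [hvolS]; exact ENNReal.ofReal_ne_top
    · exact hf_meas.aestronglyMeasurable
    · refine (ae_restrict_iff' hS_meas).mpr (ae_of_all _ fun x hx => ?_)
      have h1 : |x ⟨0, hn⟩| ^ p ≤ 1 :=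
        le_trans (Finset.single_le_sum (f := fun i => |x i| ^ p)
          (fun i _ => Real.rpow_nonneg (abs_nonneg _) _) (Finset.mem_univ _)) hx
      have h2 : |x ⟨0, hn⟩| ≤ 1 := by
        by_contra hgt
        push_neg at hgt
        have := (Real.one_lt_rpow_iff_of_pos (by linarith)).mpr (Or.inl ⟨hgt, hp0⟩)
        linarith
      rw [Real.norm_eq_abs, abs_of_nonneg (hf_nonneg x)]
      exact Real.rpow_le_one (abs_nonneg _) h2 hq0.le
  set g : ℝ → ℝ := fun t => |t| ^ q * ((1 - |t| ^ p) ^ ((m:ℝ)/p) * Vm) with hg_def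
  have hg_cont : Continuous g := by
    apply Continuous.mul (continuous_abs.rpow_const fun _ => Or.inr hq0.le)
    apply Continuous.mul _ continuous_const
    exact (continuous_const.sub (continuous_abs.rpow_const fun _ => Or.inr hp0.le)).rpow_const
      fun _ => Or.inr (by positivity)
  have hintg : IntegrableOn g (Icc (-1:ℝ) 1) := hg_cont.integrableOn_Icc
  have hg_nonneg : ∀ t ∈ Icc (-1:ℝ) 1, 0 ≤ g t := by
    intro t ht
    have habs : |t| ≤ 1 := abs_le.mpr ⟨ht.1, ht.2⟩
    have hc : (0:ℝ) ≤ 1 - |t| ^ p :=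
      sub_nonneg.mpr (Real.rpow_le_one (abs_nonneg t) habs hp0.le)
    have := Real.rpow_nonneg hc ((m:ℝ)/p)
    have := Real.rpow_nonneg (abs_nonneg t) q
    positivity
  have hNum : ∫ x in S, |x ⟨0, hn⟩| ^ q = ∫ t in Icc (-1:ℝ) 1, g t := by
    have key : ENNReal.ofReal (∫ x in S, |x ⟨0, hn⟩| ^ q)
        = ENNReal.ofReal (∫ t in Icc (-1:ℝ) 1, g t) := by
      rw [ofReal_integral_eq_lintegral_ofReal hintS
          ((ae_restrict_iff' hS_meas).mpr (ae_of_all _ fun x _ => hf_nonneg x)),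
        ofReal_integral_eq_lintegral_ofReal hintg
          ((ae_restrict_iff' measurableSet_Icc).mpr (ae_of_all _ hg_nonneg)),
        step1, step2]
    exact (ENNReal.ofReal_eq_ofReal_iff
      (setIntegral_nonneg hS_meas fun x _ => hf_nonneg x)
      (setIntegral_nonneg measurableSet_Icc hg_nonneg)).mp key
  set a : ℝ := (q+1)/p with ha_def
  set b : ℝ := (m:ℝ)/p + 1 with hb_def
  have ha : 0 < a := by positivity
  have hb : 0 < b := by positivity
  have hIoiIcc : Ioi (0:ℝ) ∩ Icc 0 1 = Ioc 0 1 := by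
    ext x
    simp only [mem_inter_iff, mem_Ioi, mem_Icc, mem_Ioc]
    exact ⟨fun ⟨h, _, h3⟩ => ⟨h, h3⟩, fun ⟨h, h3⟩ => ⟨h, le_of_lt h, h3⟩⟩
  have hIoiIoc : Ioi (0:ℝ) ∩ Ioc 0 1 = Ioc 0 1 := by
    ext x
    simp only [mem_inter_iff, mem_Ioi, mem_Ioc]
    exact ⟨fun h => h.2, fun h => ⟨h.1, h⟩⟩
  have hK : ∫ t in Icc (-1:ℝ) 1, |t| ^ q * (1-|t|^p) ^ ((m:ℝ)/p)
      = 2 * ∫ s in Ioc (0:ℝ) 1, s ^ q * (1-s^p) ^ ((m:ℝ)/p) := by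
    have habs_eq : ∀ t : ℝ,
        (Icc (-1:ℝ) 1).indicator (fun t => |t| ^ q * (1-|t|^p) ^ ((m:ℝ)/p)) t
        = (Icc (0:ℝ) 1).indicator (fun s => s ^ q * (1-s^p) ^ ((m:ℝ)/p)) |t| := by
      intro t
      by_cases ht : |t| ≤ 1
      · rw [indicator_of_mem (mem_Icc.mpr (abs_le.mp ht)),
          indicator_of_mem (mem_Icc.mpr ⟨abs_nonneg t, ht⟩)]
      · rw [indicator_of_notMem (fun h => ht (abs_le.mpr (mem_Icc.mp h))),
          indicator_of_notMem (fun h => ht (mem_Icc.mp h).2)]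
    rw [← integral_indicator measurableSet_Icc]
    simp_rw [habs_eq]
    rw [integral_comp_abs
      (f := fun s => (Icc (0:ℝ) 1).indicator (fun s => s ^ q * (1-s^p) ^ ((m:ℝ)/p)) s)]
    congr 1
    rw [setIntegral_indicator measurableSet_Icc, hIoiIcc]
  have hsub : ∫ s in Ioc (0:ℝ) 1, s ^ q * (1-s^p) ^ ((m:ℝ)/p)
      = (1/p) * ∫ u in Ioc (0:ℝ) 1, u ^ (a-1) * (1-u) ^ (b-1) := by
    have h0 := integral_comp_rpow_Ioi
      (g := (Ioc (0:ℝ) 1).indicator fun u => u ^ (a-1) * (1-u) ^ (b-1)) (p := p) hp0.ne'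
    have hLHS : ∀ x ∈ Ioi (0:ℝ),
        (|p| * x ^ (p-1)) • ((Ioc (0:ℝ) 1).indicator
          (fun u => u ^ (a-1) * (1-u) ^ (b-1)) (x ^ p))
        = (Ioc (0:ℝ) 1).indicator (fun x => p * (x ^ q * (1-x^p) ^ ((m:ℝ)/p))) x := by
      intro x hx
      have hx0 : (0:ℝ) < x := hx
      have hmem : x ^ p ∈ Ioc (0:ℝ) 1 ↔ x ∈ Ioc (0:ℝ) 1 := by
        constructor
        · rintro ⟨h1, h2⟩
          refine ⟨hx0, ?_⟩
          by_contra hgt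
          push_neg at hgt
          have := (Real.one_lt_rpow_iff_of_pos hx0).mpr (Or.inl ⟨hgt, hp0⟩)
          linarith
        · rintro ⟨h1, h2⟩
          exact ⟨Real.rpow_pos_of_pos hx0 p, Real.rpow_le_one hx0.le h2 hp0.le⟩
      by_cases hmm : x ∈ Ioc (0:ℝ) 1
      · rw [indicator_of_mem (hmem.mpr hmm), indicator_of_mem hmm, smul_eq_mul,
          abs_of_pos hp0]
        have e1 : (x ^ p) ^ (a-1) = x ^ (q+1-p) := by
          rw [← Real.rpow_mul hx0.le]
          congr 1
          rw [ha_def]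
          field_simp
        have e2 : (1 - x ^ p) ^ (b-1) = (1-x^p) ^ ((m:ℝ)/p) := by
          rw [hb_def, add_sub_cancel_right]
        have e3 : x ^ (p-1) * x ^ (q+1-p) = x ^ q := by
          rw [← Real.rpow_add hx0]
          ring_nf
        calc p * x ^ (p-1) * ((x ^ p) ^ (a-1) * (1 - x ^ p) ^ (b-1))
            = p * ((x ^ (p-1) * x ^ (q+1-p)) * (1-x^p) ^ ((m:ℝ)/p)) := by
              rw [e1, e2]; ring
          _ = p * (x ^ q * (1-x^p) ^ ((m:ℝ)/p)) := by rw [e3]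
      · rw [indicator_of_notMem (fun h => hmm (hmem.mp h)), indicator_of_notMem hmm,
          smul_zero]
    rw [setIntegral_congr_fun measurableSet_Ioi hLHS] at h0
    rw [setIntegral_indicator measurableSet_Ioc, hIoiIoc] at h0
    rw [setIntegral_indicator measurableSet_Ioc, hIoiIoc] at h0
    rw [MeasureTheory.integral_const_mul] at h0
    rw [← h0]
    field_simp
  have hbeta := real_beta a b ha hb
  have hg_int : ∫ t in Icc (-1:ℝ) 1, g t
      = 2 * ((1/p) * (Real.Gamma a * Real.Gamma b / Real.Gamma (a+b))) * Vm := by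
    have : ∀ t : ℝ, g t = (|t| ^ q * (1-|t|^p) ^ ((m:ℝ)/p)) * Vm := by
      intro t; rw [hg_def]; ring
    simp_rw [this]
    rw [MeasureTheory.integral_mul_const, hK, hsub, hbeta]
  have hGX : 0 < Real.Gamma (a+b) := Real.Gamma_pos_of_pos (by positivity)
  rw [hNum, hg_int, hvolS, ENNReal.toReal_ofReal hVn.le]
  push_cast
  rw [show ((m:ℝ)+1+q)/p + 1 = a + b by rw [ha_def, hb_def]; field_simp; ring]
  rw [Real.Gamma_add_one ha.ne']
  rw [hVn_def, hVm_def, ha_def]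
  have hC : (2 * Real.Gamma (1/p+1)) ^ m ≠ 0 := by positivity
  field_simp
  ring
end

section
/- Let p ≥ 1. The function f(t) = ∫_t^∞ e^{-u^p} du is log-concave on (0,∞), i.e. f''(t) f(t) − f'(t)^2 ≤ 0 for all t > 0 (equivalently, log f is concave). -/
open Real MeasureTheory Set Filter Topology

namespace Stmt6

noncomputable def E (p t : ℝ) : ℝ := Real.exp (-t ^ p)
noncomputable def F (p t : ℝ) : ℝ := ∫ u in Set.Ioi t, Real.exp (-u ^ p)

variable {p : ℝ}

lemma hE (hp : 1 ≤ p) (t : ℝ) :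
    HasDerivAt (E p) (-(p * t ^ (p - 1)) * E p t) t := by
  have h := (Real.hasDerivAt_rpow_const (p := p) (x := t) (Or.inr hp)).neg.exp
  have h2 : Real.exp (-t ^ p) * -(p * t ^ (p - 1)) = -(p * t ^ (p - 1)) * E p t := by
    rw [E]; ring
  simp only [Pi.neg_apply] at h
  rw [h2] at h
  exact h

lemma contE (hp : 1 ≤ p) : Continuous (E p) :=
  ((Real.differentiable_rpow_const hp).neg).exp.continuous

lemma int0 (hp : 1 ≤ p) : IntegrableOn (E p) (Set.Ioi 0) := by
  have := integrableOn_rpow_mul_exp_neg_rpow (p := p) (s := 0) (by norm_num) (by linarith)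
  simp only [Real.rpow_zero, one_mul] at this
  exact this

lemma int1 (hp : 1 ≤ p) :
    IntegrableOn (fun u => p * u ^ (p - 1) * E p u) (Set.Ioi 0) := by
  have := (integrableOn_rpow_mul_exp_neg_rpow (p := p) (s := p - 1)
    (by linarith) (by linarith)).const_mul p
  simpa [E, mul_assoc, IntegrableOn] using this

lemma F_pos (hp : 1 ≤ p) {t : ℝ} (ht : 0 < t) : 0 < F p t := by
  rw [F, setIntegral_pos_iff_support_of_nonneg_ae]
  · have hsupp : Function.support (fun u : ℝ => Real.exp (-u ^ p)) = Set.univ := by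
      ext u; simp [Function.support, Real.exp_ne_zero]
    rw [hsupp]
    simp [Real.volume_Ioi]
  · filter_upwards with u using (Real.exp_pos _).le
  · exact (int0 hp).mono_set (Set.Ioi_subset_Ioi ht.le)

lemma tendE (hp : 1 ≤ p) : Tendsto (E p) atTop (𝓝 0) := by
  have := Real.tendsto_exp_atBot.comp
    (tendsto_neg_atTop_atBot.comp (tendsto_rpow_atTop (by linarith : (0:ℝ) < p)))
  exact this

lemma key_eq (hp : 1 ≤ p) {t : ℝ} (ht : 0 < t) :
    ∫ u in Set.Ioi t, p * u ^ (p - 1) * E p u = E p t := by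
  have h : ∫ u in Set.Ioi t, p * u ^ (p - 1) * E p u = 0 - (-(E p t)) := by
    apply integral_Ioi_of_hasDerivAt_of_tendsto
    · exact ((contE hp).neg.continuousAt).continuousWithinAt
    · intro x hx
      have := (hE hp x).neg
      have h2 : -(-(p * x ^ (p - 1)) * E p x) = p * x ^ (p - 1) * E p x := by ring
      rwa [h2] at this
    · exact (int1 hp).mono_set (Set.Ioi_subset_Ioi ht.le)
    · simpa using (tendE hp).neg
  simpa using h

lemma key_ineq (hp : 1 ≤ p) {t : ℝ} (ht : 0 < t) :
    p * t ^ (p - 1) * F p t ≤ E p t := by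
  have hF : F p t = ∫ u in Set.Ioi t, E p u := rfl
  rw [hF, ← MeasureTheory.integral_const_mul]
  rw [← key_eq hp ht]
  apply setIntegral_mono_on
  · exact (((int0 hp).mono_set (Set.Ioi_subset_Ioi ht.le)).const_mul _)
  · exact (int1 hp).mono_set (Set.Ioi_subset_Ioi ht.le)
  · exact measurableSet_Ioi
  · intro u hu
    have h1 : t ^ (p - 1) ≤ u ^ (p - 1) :=
      Real.rpow_le_rpow ht.le (le_of_lt hu) (by linarith)
    have h2 : (0:ℝ) ≤ E p u := (Real.exp_pos _).le
    have h3 : p * t ^ (p - 1) ≤ p * u ^ (p - 1) :=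
      mul_le_mul_of_nonneg_left h1 (by linarith)
    exact mul_le_mul_of_nonneg_right h3 h2

lemma hF (hp : 1 ≤ p) {t : ℝ} (ht : 0 < t) : HasDerivAt (F p) (-(E p t)) t := by
  set c := t / 2 with hc_def
  have hc : 0 < c := by positivity
  have hct : c < t := by rw [hc_def]; linarith
  have heq : ∀ x ∈ Set.Ioi c, F p x = F p c - ∫ u in c..x, E p u := by
    intro x hx
    have hle : c ≤ x := le_of_lt hx
    have hsplit : F p c = (∫ u in Set.Ioc c x, E p u) + F p x := by
      have h := setIntegral_union (f := E p) (μ := volume)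
        (Set.Ioc_disjoint_Ioi le_rfl) measurableSet_Ioi
        ((int0 hp).mono_set (by intro y hy; exact lt_of_lt_of_le hc hy.1.le))
        ((int0 hp).mono_set (Set.Ioi_subset_Ioi (hc.le.trans hle)))
      rw [Set.Ioc_union_Ioi_eq_Ioi hle] at h
      exact h
    rw [intervalIntegral.integral_of_le hle]
    linarith
  have hd : HasDerivAt (fun x => F p c - ∫ u in c..x, E p u) (-(E p t)) t := by
    have hI : HasDerivAt (fun x => ∫ u in c..x, E p u) (E p t) t := by
      apply intervalIntegral.integral_hasDerivAt_right
      · apply IntegrableOn.intervalIntegrable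
        apply (int0 hp).mono_set
        rw [Set.uIcc_of_le hct.le]
        intro y hy; exact lt_of_lt_of_le hc hy.1
      · exact (contE hp).stronglyMeasurableAtFilter _ _
      · exact (contE hp).continuousAt
    exact ((hasDerivAt_const t (F p c)).sub hI).congr_deriv (by simp)
  apply hd.congr_of_eventuallyEq
  exact Filter.eventuallyEq_of_mem (Ioi_mem_nhds hct) heq

lemma hratio (hp : 1 ≤ p) {t : ℝ} (ht : 0 < t) :
    HasDerivAt (fun x => -(E p x) / F p x)
      ((-(-(p * t ^ (p - 1)) * E p t) * F p t - -(E p t) * -(E p t)) / F p t ^ 2) t :=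
  (hE hp t).neg.div (hF hp ht) (F_pos hp ht).ne'

lemma ratio_deriv_nonpos (hp : 1 ≤ p) {t : ℝ} (ht : 0 < t) :
    deriv (fun x => -(E p x) / F p x) t ≤ 0 := by
  rw [(hratio hp ht).deriv]
  apply div_nonpos_of_nonpos_of_nonneg _ (sq_nonneg _)
  have hkey := key_ineq hp ht
  have hE0 : 0 < E p t := Real.exp_pos _
  nlinarith [hE0.le, mul_le_mul_of_nonneg_left hkey hE0.le]

lemma ratio_anti (hp : 1 ≤ p) :
    AntitoneOn (fun x => -(E p x) / F p x) (Set.Ioi 0) := by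
  apply antitoneOn_of_deriv_nonpos (convex_Ioi 0)
  · intro x hx
    exact (hratio hp hx).continuousAt.continuousWithinAt
  · rw [interior_Ioi]
    intro x hx
    exact (hratio hp hx).differentiableAt.differentiableWithinAt
  · rw [interior_Ioi]
    intro x hx
    exact ratio_deriv_nonpos hp hx

lemma hG (hp : 1 ≤ p) {t : ℝ} (ht : 0 < t) :
    HasDerivAt (fun x => Real.log (F p x)) (-(E p t) / F p t) t :=
  (hF hp ht).log (F_pos hp ht).ne'

end Stmt6

theorem stmt6 (p : ℝ) (hp : 1 ≤ p) :
    ConcaveOn ℝ (Set.Ioi 0)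
      (fun t : ℝ => Real.log (∫ u in Set.Ioi t, Real.exp (-u ^ p))) := by
  have hGd : ∀ t ∈ Set.Ioi (0:ℝ), HasDerivAt (fun x => Real.log (Stmt6.F p x))
      (-(Stmt6.E p t) / Stmt6.F p t) t := fun t ht => Stmt6.hG hp ht
  have hfun : (fun t : ℝ => Real.log (∫ u in Set.Ioi t, Real.exp (-u ^ p)))
      = fun x => Real.log (Stmt6.F p x) := rfl
  rw [hfun]
  apply AntitoneOn.concaveOn_of_deriv (convex_Ioi 0)
  · intro x hx
    exact (hGd x hx).continuousAt.continuousWithinAt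
  · rw [interior_Ioi]
    intro x hx
    exact (hGd x hx).differentiableAt.differentiableWithinAt
  · rw [interior_Ioi]
    intro x hx y hy hxy
    rw [(hGd x hx).deriv, (hGd y hy).deriv]
    exact Stmt6.ratio_anti hp hx hy hxy
end

section
/- Let c : [0,∞) → [0,∞) be nondecreasing and concave. Then the function f(t) := t · c(1/√t), defined for t > 0, is concave on (0,∞). -/
theorem stmt8 (c : ℝ → ℝ) (hmono : MonotoneOn c (Set.Ici 0))
    (hconc : ConcaveOn ℝ (Set.Ici 0) c) (hnn : ∀ x ∈ Set.Ici (0 : ℝ), 0 ≤ c x) :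
    ConcaveOn ℝ (Set.Ioi 0) (fun t : ℝ => t * c (1 / Real.sqrt t)) := by
  refine ⟨convex_Ioi 0, ?_⟩
  intro t ht s hs a b ha hb hab
  simp only [smul_eq_mul]
  have ht' : (0:ℝ) < t := ht
  have hs' : (0:ℝ) < s := hs
  set u := a * t + b * s with hu
  have hu' : 0 < u := by
    have h1 : a * min t s + b * min t s = min t s := by rw [← add_mul, hab, one_mul]
    have h2 : a * min t s + b * min t s ≤ u :=
      add_le_add (mul_le_mul_of_nonneg_left (min_le_left _ _) ha)
        (mul_le_mul_of_nonneg_left (min_le_right _ _) hb)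
    exact lt_of_lt_of_le (lt_min ht' hs') (h1 ▸ h2)
  have hst : Real.sqrt t > 0 := Real.sqrt_pos.mpr ht'
  have hss : Real.sqrt s > 0 := Real.sqrt_pos.mpr hs'
  have hsu : Real.sqrt u > 0 := Real.sqrt_pos.mpr hu'
  -- weights for concavity of c
  have hwa : 0 ≤ a * t / u := by positivity
  have hwb : 0 ≤ b * s / u := by positivity
  have hwsum : a * t / u + b * s / u = 1 := by
    field_simp; exact hu.symm
  have hx : (1 / Real.sqrt t : ℝ) ∈ Set.Ici (0:ℝ) := Set.mem_Ici.mpr (by positivity)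
  have hy : (1 / Real.sqrt s : ℝ) ∈ Set.Ici (0:ℝ) := Set.mem_Ici.mpr (by positivity)
  have hc := hconc.2 hx hy hwa hwb hwsum
  simp only [smul_eq_mul] at hc
  -- compute the argument
  have harg : a * t / u * (1 / Real.sqrt t) + b * s / u * (1 / Real.sqrt s)
      = (a * Real.sqrt t + b * Real.sqrt s) / u := by
    have h1 : t / Real.sqrt t = Real.sqrt t := Real.div_sqrt
    have h2 : s / Real.sqrt s = Real.sqrt s := Real.div_sqrt
    have e1 : a * t / u * (1 / Real.sqrt t) = a * (t / Real.sqrt t) / u := by ring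
    have e2 : b * s / u * (1 / Real.sqrt s) = b * (s / Real.sqrt s) / u := by ring
    rw [e1, e2, h1, h2]; ring
  rw [harg] at hc
  -- sqrt concavity: a √t + b √s ≤ √u
  have hsq : a * Real.sqrt t + b * Real.sqrt s ≤ Real.sqrt u := by
    have := Real.strictConcaveOn_sqrt.concaveOn.2 (Set.mem_Ici.mpr ht'.le)
      (Set.mem_Ici.mpr hs'.le) ha hb hab
    simpa using this
  -- monotonicity step
  have hle : (a * Real.sqrt t + b * Real.sqrt s) / u ≤ 1 / Real.sqrt u := by
    rw [div_le_div_iff₀ hu' hsu]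
    calc (a * Real.sqrt t + b * Real.sqrt s) * Real.sqrt u
        ≤ Real.sqrt u * Real.sqrt u :=
          mul_le_mul_of_nonneg_right hsq hsu.le
      _ = u := Real.mul_self_sqrt hu'.le
      _ = 1 * u := (one_mul u).symm
  have hargnn : (0:ℝ) ≤ (a * Real.sqrt t + b * Real.sqrt s) / u := by positivity
  have hmono' := hmono (Set.mem_Ici.mpr hargnn) (Set.mem_Ici.mpr (by positivity) : (1/Real.sqrt u : ℝ) ∈ Set.Ici 0) hle
  -- put it together
  have key : a * t / u * c (1 / Real.sqrt t) + b * s / u * c (1 / Real.sqrt s)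
      ≤ c (1 / Real.sqrt u) := le_trans hc hmono'
  have := mul_le_mul_of_nonneg_left key hu'.le
  calc a * (t * c (1 / Real.sqrt t)) + b * (s * c (1 / Real.sqrt s))
      = u * (a * t / u * c (1 / Real.sqrt t) + b * s / u * c (1 / Real.sqrt s)) := by
        field_simp
    _ ≤ u * c (1 / Real.sqrt u) := this
    _ = (a * t + b * s) * c (1 / Real.sqrt (a * t + b * s)) := by rw [← hu]
end

section
/- Fix 1 < p ≤ 2 and integers 1 ≤ q ≤ n. For every a = (a_1,…,a_n) with a_1 ≥ a_2 ≥ ⋯ ≥ a_n ≥ 0 and ∑ a_i^2 = 1, one has q^{1/p} (∑_{i ≤ q} a_i^{p/(p-1)})^{(p-1)/p} + √q (∑_{i > q} a_i^2)^{1/2} ≤ √2 · q^{1/p}. -/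
open Finset

lemma sum_rpow_le_rpow_sum {ι : Type*} (s : Finset ι) (x : ι → ℝ)
    (hx : ∀ i ∈ s, 0 ≤ x i) {r : ℝ} (hr : 1 ≤ r) :
    ∑ i ∈ s, x i ^ r ≤ (∑ i ∈ s, x i) ^ r := by
  have hX : 0 ≤ ∑ i ∈ s, x i := Finset.sum_nonneg hx
  rcases eq_or_lt_of_le hX with hX0 | hX0
  · have hall : ∀ i ∈ s, x i = 0 := by
      intro i hi
      have := (Finset.sum_eq_zero_iff_of_nonneg hx).mp hX0.symm
      exact this i hi
    have h1 : ∑ i ∈ s, x i ^ r = 0 := by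
      apply Finset.sum_eq_zero
      intro i hi
      rw [hall i hi, Real.zero_rpow (by linarith : r ≠ 0)]
    rw [h1, ← hX0, Real.zero_rpow (by linarith : r ≠ 0)]
  · have key : ∀ i ∈ s, x i ^ r ≤ x i * (∑ j ∈ s, x j) ^ (r - 1) := by
      intro i hi
      have h1 : x i ^ r = x i ^ (1 : ℝ) * x i ^ (r - 1) := by
        rw [← Real.rpow_add' (hx i hi) (by linarith)]
        ring_nf
      rw [h1, Real.rpow_one]
      apply mul_le_mul_of_nonneg_left _ (hx i hi)
      exact Real.rpow_le_rpow (hx i hi) (Finset.single_le_sum hx hi) (by linarith)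
    calc ∑ i ∈ s, x i ^ r ≤ ∑ i ∈ s, x i * (∑ j ∈ s, x j) ^ (r - 1) :=
          Finset.sum_le_sum key
      _ = (∑ j ∈ s, x j) * (∑ j ∈ s, x j) ^ (r - 1) := by rw [← Finset.sum_mul]
      _ = (∑ j ∈ s, x j) ^ r := by
          rw [← Real.rpow_one_add' (le_of_lt hX0) (by linarith)]
          ring_nf

theorem stmt14 (p : ℝ) (hp1 : 1 < p) (hp2 : p ≤ 2) (n q : ℕ) (hq : 1 ≤ q) (hqn : q ≤ n)
    (a : Fin n → ℝ) (hmono : ∀ i j : Fin n, i ≤ j → a j ≤ a i) (hnn : ∀ i, 0 ≤ a i)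
    (hnorm : ∑ i, a i ^ 2 = 1) :
    (q : ℝ) ^ (1 / p) *
        (∑ i ∈ Finset.univ.filter (fun i : Fin n => (i : ℕ) < q), a i ^ (p / (p - 1)))
          ^ ((p - 1) / p)
      + Real.sqrt q *
        Real.sqrt (∑ i ∈ Finset.univ.filter (fun i : Fin n => q ≤ (i : ℕ)), a i ^ 2)
    ≤ Real.sqrt 2 * (q : ℝ) ^ (1 / p) := by
  have hp0 : (0 : ℝ) < p := by linarith
  have hp1' : (0 : ℝ) < p - 1 := by linarith
  set s := Finset.univ.filter (fun i : Fin n => (i : ℕ) < q) with hs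
  set t := Finset.univ.filter (fun i : Fin n => q ≤ (i : ℕ)) with ht
  set A := ∑ i ∈ s, a i ^ 2 with hA
  set B := ∑ i ∈ t, a i ^ 2 with hB
  have hAnn : 0 ≤ A := Finset.sum_nonneg fun i _ => sq_nonneg _
  have hBnn : 0 ≤ B := Finset.sum_nonneg fun i _ => sq_nonneg _
  have hAB : A + B = 1 := by
    have htt : t = Finset.univ.filter (fun i : Fin n => ¬ ((i : ℕ) < q)) := by
      simp [ht, not_lt]
    rw [hA, hB, htt, hs, Finset.sum_filter_add_sum_filter_not]
    exact hnorm
  -- first sum bound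
  have hS : ∑ i ∈ s, a i ^ (p / (p - 1)) ≤ A ^ (p / (p - 1) / 2) := by
    have heq : ∀ i ∈ s, a i ^ (p / (p - 1)) = (a i ^ 2) ^ (p / (p - 1) / 2) := by
      intro i _
      rw [← Real.rpow_natCast (a i) 2, ← Real.rpow_mul (hnn i)]
      congr 1
      push_cast
      ring
    rw [Finset.sum_congr rfl heq]
    apply sum_rpow_le_rpow_sum s (fun i => a i ^ 2) (fun i _ => sq_nonneg _)
    rw [le_div_iff₀ (by norm_num : (0:ℝ) < 2), le_div_iff₀ hp1']
    linarith
  have hSnn : 0 ≤ ∑ i ∈ s, a i ^ (p / (p - 1)) :=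
    Finset.sum_nonneg fun i _ => Real.rpow_nonneg (hnn i) _
  have h2 : (∑ i ∈ s, a i ^ (p / (p - 1))) ^ ((p - 1) / p) ≤ Real.sqrt A := by
    have := Real.rpow_le_rpow hSnn hS (by positivity : 0 ≤ (p - 1) / p)
    refine this.trans_eq ?_
    rw [← Real.rpow_mul hAnn, Real.sqrt_eq_rpow]
    congr 1
    field_simp
  have h3 : Real.sqrt q ≤ (q : ℝ) ^ (1 / p) := by
    rw [Real.sqrt_eq_rpow]
    apply Real.rpow_le_rpow_of_exponent_le
    · exact_mod_cast hq
    · rw [div_le_div_iff₀ (by norm_num) hp0]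
      linarith
  have h4 : Real.sqrt A + Real.sqrt B ≤ Real.sqrt 2 := by
    rw [show Real.sqrt A + Real.sqrt B = Real.sqrt ((Real.sqrt A + Real.sqrt B) ^ 2) by
      rw [Real.sqrt_sq (by positivity)]]
    apply Real.sqrt_le_sqrt
    have hA2 := Real.sq_sqrt hAnn
    have hB2 := Real.sq_sqrt hBnn
    nlinarith [sq_nonneg (Real.sqrt A - Real.sqrt B)]
  have hqp : 0 ≤ (q : ℝ) ^ (1 / p) := Real.rpow_nonneg (Nat.cast_nonneg q) _
  calc (q : ℝ) ^ (1 / p) * (∑ i ∈ s, a i ^ (p / (p - 1))) ^ ((p - 1) / p)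
        + Real.sqrt q * Real.sqrt B
      ≤ (q : ℝ) ^ (1 / p) * Real.sqrt A + (q : ℝ) ^ (1 / p) * Real.sqrt B := by
        gcongr
    _ = (q : ℝ) ^ (1 / p) * (Real.sqrt A + Real.sqrt B) := by ring
    _ ≤ (q : ℝ) ^ (1 / p) * Real.sqrt 2 := by gcongr
    _ = Real.sqrt 2 * (q : ℝ) ^ (1 / p) := by ring
end

section
/- Fix 2 < p < ∞ and integers 1 ≤ q ≤ n. For every a = (a_1,…,a_n) with a_1 ≥ ⋯ ≥ a_n ≥ 0 and ∑ a_i^2 = 1, one has q^{1/p} ≤ q^{1/p} (∑_{i ≤ q} a_i^{p/(p-1)})^{(p-1)/p} + √q (∑_{i > q} a_i^2)^{1/2} ≤ √(2q) · (n/q)^{1/2 - 1/p}. -/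
open Finset Real

private lemma aux_rpow_add_le (x y e : ℝ) (hx : 0 ≤ x) (hy : 0 ≤ y) (he0 : 0 ≤ e)
    (he1 : e ≤ 1) : (x + y) ^ e ≤ x ^ e + y ^ e := by
  have h := NNReal.rpow_add_le_add_rpow ⟨x, hx⟩ ⟨y, hy⟩ he0 he1
  exact_mod_cast h

private lemma aux_sum_rpow_superadd {ι : Type*} (s : Finset ι) (f : ι → ℝ)
    (hf : ∀ i ∈ s, 0 ≤ f i) {e : ℝ} (he0 : 0 < e) (he1 : e ≤ 1) :
    (∑ i ∈ s, f i) ^ e ≤ ∑ i ∈ s, f i ^ e := by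
  classical
  induction s using Finset.cons_induction with
  | empty => simp [Real.zero_rpow he0.ne']
  | cons a s ha ih =>
    rw [Finset.sum_cons, Finset.sum_cons]
    have hfa : 0 ≤ f a := hf a (Finset.mem_cons_self _ _)
    have hfs : 0 ≤ ∑ i ∈ s, f i := Finset.sum_nonneg fun i hi => hf i (Finset.mem_cons_of_mem hi)
    calc (f a + ∑ i ∈ s, f i) ^ e ≤ f a ^ e + (∑ i ∈ s, f i) ^ e :=
          aux_rpow_add_le _ _ _ hfa hfs he0.le he1
      _ ≤ f a ^ e + ∑ i ∈ s, f i ^ e := by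
          gcongr
          exact ih fun i hi => hf i (Finset.mem_cons_of_mem hi)

private lemma aux_sum_rpow_le {ι : Type*} (s : Finset ι) (f : ι → ℝ)
    (hf : ∀ i ∈ s, 0 ≤ f i) {e : ℝ} (he0 : 0 < e) (he1 : e ≤ 1) :
    ∑ i ∈ s, f i ^ e ≤ (s.card : ℝ) ^ (1 - e) * (∑ i ∈ s, f i) ^ e := by
  have h1e : 1 ≤ 1 / e := by rw [le_div_iff₀ he0]; linarith
  have h := Real.rpow_sum_le_const_mul_sum_rpow s (fun i => f i ^ e) h1e
  have habs : ∀ i ∈ s, |f i ^ e| = f i ^ e := fun i hi =>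
    abs_of_nonneg (Real.rpow_nonneg (hf i hi) e)
  rw [Finset.sum_congr rfl habs] at h
  have h2 : ∀ i ∈ s, |f i ^ e| ^ (1/e) = f i := by
    intro i hi
    rw [habs i hi, ← Real.rpow_mul (hf i hi), mul_one_div_cancel he0.ne', Real.rpow_one]
  rw [Finset.sum_congr rfl h2] at h
  -- h : (∑ i ∈ s, f i ^ e) ^ (1/e) ≤ ↑s.card ^ (1/e - 1) * ∑ i ∈ s, f i
  have hS : 0 ≤ ∑ i ∈ s, f i ^ e :=
    Finset.sum_nonneg fun i hi => Real.rpow_nonneg (hf i hi) e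
  have h3 := Real.rpow_le_rpow (Real.rpow_nonneg hS _) h he0.le
  rw [← Real.rpow_mul hS, one_div_mul_cancel he0.ne', Real.rpow_one,
    Real.mul_rpow (Real.rpow_nonneg (Nat.cast_nonneg _) _)
      (Finset.sum_nonneg fun i hi => hf i hi),
    ← Real.rpow_mul (Nat.cast_nonneg _)] at h3
  have : (1/e - 1) * e = 1 - e := by field_simp
  rwa [this] at h3

set_option maxHeartbeats 1000000 in
theorem stmt15 (p : ℝ) (hp : 2 < p) (n q : ℕ) (hq : 1 ≤ q) (hqn : q ≤ n)
    (a : Fin n → ℝ) (hmono : ∀ i j : Fin n, i ≤ j → a j ≤ a i) (hnn : ∀ i, 0 ≤ a i)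
    (hnorm : ∑ i, a i ^ 2 = 1) :
    (q : ℝ) ^ (1 / p) ≤
      (q : ℝ) ^ (1 / p) *
          (∑ i ∈ Finset.univ.filter (fun i : Fin n => (i : ℕ) < q), a i ^ (p / (p - 1)))
            ^ ((p - 1) / p)
        + Real.sqrt q *
          Real.sqrt (∑ i ∈ Finset.univ.filter (fun i : Fin n => q ≤ (i : ℕ)), a i ^ 2) ∧
    (q : ℝ) ^ (1 / p) *
          (∑ i ∈ Finset.univ.filter (fun i : Fin n => (i : ℕ) < q), a i ^ (p / (p - 1)))
            ^ ((p - 1) / p)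
        + Real.sqrt q *
          Real.sqrt (∑ i ∈ Finset.univ.filter (fun i : Fin n => q ≤ (i : ℕ)), a i ^ 2)
      ≤ Real.sqrt (2 * q) * ((n : ℝ) / q) ^ (1 / 2 - 1 / p) := by
  classical
  have hp1 : (0:ℝ) < p - 1 := by linarith
  have hp0 : (0:ℝ) < p := by linarith
  set r : ℝ := p / (p - 1) with hr_def
  have hr1 : 1 < r := by rw [hr_def, lt_div_iff₀ hp1]; linarith
  have hr2 : r < 2 := by rw [hr_def, div_lt_iff₀ hp1]; linarith
  have hr0 : 0 < r := by linarith
  have hrne : r ≠ 0 := ne_of_gt hr0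
  have hrinv : 1 / r = (p - 1) / p := by rw [hr_def, one_div_div]
  have hsum : 1 / p + 1 / r = 1 := by rw [hrinv]; field_simp; ring
  set A := Finset.univ.filter (fun i : Fin n => (i : ℕ) < q) with hA
  set B := Finset.univ.filter (fun i : Fin n => q ≤ (i : ℕ)) with hB
  set S1 := ∑ i ∈ A, a i ^ 2 with hS1def
  set S2 := ∑ i ∈ B, a i ^ 2 with hS2def
  set T := ∑ i ∈ A, a i ^ r with hTdef
  have hS1nn : 0 ≤ S1 := Finset.sum_nonneg fun i _ => sq_nonneg _
  have hS2nn : 0 ≤ S2 := Finset.sum_nonneg fun i _ => sq_nonneg _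
  have h12 : S1 + S2 = 1 := by
    rw [hS1def, hS2def, hA, hB, ← hnorm,
      ← Finset.sum_filter_add_sum_filter_not Finset.univ (fun i : Fin n => (i : ℕ) < q)]
    congr 1
    apply Finset.sum_congr _ (fun _ _ => rfl)
    apply Finset.filter_congr
    intro i _
    simp [not_lt]
  have hr_half : 0 < r / 2 := by linarith
  have hr_half1 : r / 2 ≤ 1 := by linarith
  have hpow_rw : ∀ i : Fin n, ((a i ^ 2 : ℝ)) ^ (r/2 : ℝ) = a i ^ r := by
    intro i
    rw [← Real.rpow_natCast (a i) 2, ← Real.rpow_mul (hnn i)]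
    congr 1
    push_cast
    ring
  have hTge : S1 ^ (r/2 : ℝ) ≤ T := by
    have h := aux_sum_rpow_superadd A (fun i => a i ^ 2) (fun i _ => sq_nonneg _)
      hr_half hr_half1
    rw [Finset.sum_congr rfl (fun i _ => hpow_rw i)] at h
    exact h
  have hcard : (A.card : ℝ) ≤ q := by
    have h1 : A.card ≤ (Finset.range q).card := by
      refine Finset.card_le_card_of_injOn (fun i : Fin n => (i : ℕ)) ?_ ?_
      · intro i hi
        simp only [hA, Finset.coe_filter, Set.mem_setOf_eq, Finset.mem_univ, true_and] at hi
        simpa using hi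
      · intro i _ j _ hij
        exact Fin.val_injective hij
    have := h1.trans_eq (Finset.card_range q)
    exact_mod_cast this
  have hTle : T ≤ (q:ℝ) ^ (1 - r/2 : ℝ) * S1 ^ (r/2 : ℝ) := by
    have h := aux_sum_rpow_le A (fun i => a i ^ 2) (fun i _ => sq_nonneg _)
      hr_half hr_half1
    rw [Finset.sum_congr rfl (fun i _ => hpow_rw i)] at h
    refine h.trans (mul_le_mul_of_nonneg_right ?_ (Real.rpow_nonneg hS1nn _))
    exact Real.rpow_le_rpow (Nat.cast_nonneg _) hcard (by linarith)
  have hTnn : 0 ≤ T := Finset.sum_nonneg fun i _ => Real.rpow_nonneg (hnn i) r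
  clear_value r
  clear_value S1 S2 T
  set u := Real.sqrt S1 with hu
  set v := Real.sqrt S2 with hv
  have hunn : 0 ≤ u := Real.sqrt_nonneg _
  have hvnn : 0 ≤ v := Real.sqrt_nonneg _
  have hu2 : u ^ 2 = S1 := Real.sq_sqrt hS1nn
  have hv2 : v ^ 2 = S2 := Real.sq_sqrt hS2nn
  have hq0 : (0:ℝ) < q := by exact_mod_cast hq
  have hq1 : (1:ℝ) ≤ q := by exact_mod_cast hq
  have key1 : u ≤ T ^ (1/r : ℝ) := by
    have h := Real.rpow_le_rpow (Real.rpow_nonneg hS1nn _) hTge (by positivity : (0:ℝ) ≤ 1/r)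
    rw [← Real.rpow_mul hS1nn] at h
    have he : r / 2 * (1/r) = 1/2 := by field_simp
    rw [he] at h
    rwa [hu, Real.sqrt_eq_rpow]
  have key2 : T ^ (1/r : ℝ) ≤ (q:ℝ) ^ (1/r - 1/2 : ℝ) * u := by
    have h := Real.rpow_le_rpow hTnn hTle (by positivity : (0:ℝ) ≤ 1/r)
    rw [Real.mul_rpow (Real.rpow_nonneg (Nat.cast_nonneg _) _) (Real.rpow_nonneg hS1nn _),
      ← Real.rpow_mul (Nat.cast_nonneg _), ← Real.rpow_mul hS1nn] at h
    have he2 : r / 2 * (1/r) = 1/2 := by field_simp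
    have he1 : (1 - r/2) * (1/r) = 1/r - 1/2 := by rw [sub_mul, one_mul, he2]
    rw [he1, he2] at h
    rwa [hu, Real.sqrt_eq_rpow]
  have hqmul : (q:ℝ) ^ (1/p : ℝ) * (q:ℝ) ^ (1/r - 1/2 : ℝ) = Real.sqrt q := by
    rw [← Real.rpow_add hq0, Real.sqrt_eq_rpow]
    congr 1
    linarith
  have hqp_le : (q:ℝ) ^ (1/p : ℝ) ≤ Real.sqrt q := by
    rw [Real.sqrt_eq_rpow]
    apply Real.rpow_le_rpow_of_exponent_le hq1
    rw [div_le_div_iff₀ hp0 (by norm_num : (0:ℝ) < 2)]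
    linarith
  have hqpnn : (0:ℝ) ≤ (q:ℝ) ^ (1/p : ℝ) := Real.rpow_nonneg (Nat.cast_nonneg _) _
  have hu1 : u ≤ 1 := by
    rw [hu, ← Real.sqrt_one]
    exact Real.sqrt_le_sqrt (by linarith)
  have hv1 : v ≤ 1 := by
    rw [hv, ← Real.sqrt_one]
    exact Real.sqrt_le_sqrt (by linarith)
  clear_value u v
  have huv_ge : 1 ≤ u + v := by
    nlinarith [mul_nonneg hunn (sub_nonneg.2 hu1), mul_nonneg hvnn (sub_nonneg.2 hv1), hu2, hv2]
  have huv_le : u + v ≤ Real.sqrt 2 := by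
    have h2 : (u + v) ^ 2 ≤ 2 := by nlinarith [sq_nonneg (u - v)]
    calc u + v = Real.sqrt ((u+v)^2) := (Real.sqrt_sq (by linarith)).symm
      _ ≤ Real.sqrt 2 := Real.sqrt_le_sqrt h2
  have hfac : 1 ≤ ((n:ℝ)/q) ^ (1/2 - 1/p : ℝ) := by
    apply Real.one_le_rpow
    · rw [le_div_iff₀ hq0, one_mul]; exact_mod_cast hqn
    · rw [sub_nonneg, div_le_div_iff₀ hp0 (by norm_num : (0:ℝ) < 2)]; linarith
  rw [hrinv] at key1 key2 hqmul
  constructor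
  · calc (q:ℝ) ^ (1/p : ℝ) = (q:ℝ) ^ (1/p : ℝ) * 1 := (mul_one _).symm
      _ ≤ (q:ℝ) ^ (1/p : ℝ) * (u + v) := by
          exact mul_le_mul_of_nonneg_left huv_ge hqpnn
      _ = (q:ℝ) ^ (1/p : ℝ) * u + (q:ℝ) ^ (1/p : ℝ) * v := by ring
      _ ≤ (q:ℝ) ^ (1/p : ℝ) * T ^ ((p-1)/p : ℝ) + Real.sqrt q * v :=
          add_le_add (mul_le_mul_of_nonneg_left key1 hqpnn)
            (mul_le_mul_of_nonneg_right hqp_le hvnn)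
  · calc (q:ℝ) ^ (1/p : ℝ) * T ^ ((p-1)/p : ℝ) + Real.sqrt q * v
        ≤ (q:ℝ) ^ (1/p : ℝ) * ((q:ℝ) ^ ((p-1)/p - 1/2 : ℝ) * u) + Real.sqrt q * v :=
          add_le_add (mul_le_mul_of_nonneg_left key2 hqpnn) le_rfl
      _ = Real.sqrt q * (u + v) := by rw [← mul_assoc, hqmul]; ring
      _ ≤ Real.sqrt q * Real.sqrt 2 := mul_le_mul_of_nonneg_left huv_le (Real.sqrt_nonneg _)
      _ = Real.sqrt (2 * q) := by
          rw [Real.sqrt_mul (by norm_num : (0:ℝ) ≤ 2), mul_comm]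
      _ ≤ Real.sqrt (2 * q) * ((n:ℝ)/q) ^ (1/2 - 1/p : ℝ) :=
          le_mul_of_one_le_right (Real.sqrt_nonneg _) hfac
end

section
/- Let p > 0, λ > 0, and define α(p,λ) = 2∫_0^∞ e^{-λ t^p - t^2} dt. Then λ ↦ α(p,λ) is nonincreasing and λ ↦ λ α(p,λ)^p is nondecreasing on (0,∞). -/
open MeasureTheory

/-- α(p, λ) = 2 ∫_0^∞ e^{-λ tᵖ - t²} dt. -/
noncomputable def alphaF (p lam : ℝ) : ℝ :=
  2 * ∫ t in Set.Ioi (0 : ℝ), Real.exp (-lam * t ^ p - t ^ 2)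

lemma cont_aux (p a b : ℝ) (hp : 0 < p) :
    Continuous fun t : ℝ => Real.exp (-a * t ^ p - b * t ^ 2) := by
  have hc : Continuous fun t : ℝ => t ^ p := by
    apply continuous_iff_continuousAt.mpr
    intro x
    exact Real.continuousAt_rpow_const x p (Or.inr hp.le)
  exact (((continuous_const.mul hc).sub (continuous_const.mul (continuous_pow 2))).rexp)

lemma integ_aux (p a b : ℝ) (hp : 0 < p) (ha : 0 ≤ a) (hb : 0 < b) :
    IntegrableOn (fun t : ℝ => Real.exp (-a * t ^ p - b * t ^ 2)) (Set.Ioi 0) := by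
  apply Integrable.mono' ((integrable_exp_neg_mul_sq hb).restrict (s := Set.Ioi 0))
  · exact (cont_aux p a b hp).aestronglyMeasurable
  · filter_upwards [ae_restrict_mem measurableSet_Ioi] with t ht
    rw [Real.norm_eq_abs, abs_of_pos (Real.exp_pos _)]
    apply Real.exp_le_exp.mpr
    have : 0 ≤ a * t ^ p := mul_nonneg ha (Real.rpow_nonneg (le_of_lt ht) p)
    nlinarith

lemma int_nonneg (p a b : ℝ) :
    0 ≤ ∫ t in Set.Ioi (0 : ℝ), Real.exp (-a * t ^ p - b * t ^ 2) :=
  setIntegral_nonneg measurableSet_Ioi fun t _ => (Real.exp_pos _).le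

lemma alphaF_eq (p lam : ℝ) (hp : 0 < p) (hlam : 0 < lam) :
    alphaF p lam = lam ^ (-p⁻¹) *
      (2 * ∫ t in Set.Ioi (0 : ℝ), Real.exp (-1 * t ^ p - lam ^ (-(2 * p⁻¹)) * t ^ 2)) := by
  have hc : (0 : ℝ) < lam ^ p⁻¹ := Real.rpow_pos_of_pos hlam _
  have key : (∫ t in Set.Ioi (0 : ℝ), Real.exp (-lam * t ^ p - t ^ 2)) =
      ∫ t in Set.Ioi (0 : ℝ),
        (fun s : ℝ => Real.exp (-1 * s ^ p - lam ^ (-(2 * p⁻¹)) * s ^ 2)) (lam ^ p⁻¹ * t) := by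
    apply setIntegral_congr_fun measurableSet_Ioi
    intro t ht
    simp only
    congr 1
    have ht' : (0 : ℝ) ≤ t := (le_of_lt ht)
    have h1 : (lam ^ p⁻¹ * t) ^ p = lam * t ^ p := by
      rw [Real.mul_rpow hc.le ht', ← Real.rpow_mul hlam.le, inv_mul_cancel₀ hp.ne',
        Real.rpow_one]
    have h2 : lam ^ (-(2 * p⁻¹)) * (lam ^ p⁻¹ * t) ^ 2 = t ^ 2 := by
      rw [mul_pow, ← Real.rpow_natCast (lam ^ p⁻¹) 2, ← Real.rpow_mul hlam.le,
        ← mul_assoc, ← Real.rpow_add hlam]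
      push_cast
      ring_nf
      rw [Real.rpow_zero, one_mul]
    rw [h1, h2]
    ring
  rw [alphaF, key, integral_comp_mul_left_Ioi
    (fun s : ℝ => Real.exp (-1 * s ^ p - lam ^ (-(2 * p⁻¹)) * s ^ 2)) 0 hc, mul_zero]
  rw [smul_eq_mul, ← Real.rpow_neg_one (lam ^ p⁻¹), ← Real.rpow_mul hlam.le]
  ring_nf
  congr 3
  funext x
  ring_nf

theorem stmt16 (p : ℝ) (hp : 0 < p) :
    AntitoneOn (fun lam => alphaF p lam) (Set.Ioi 0) ∧
    MonotoneOn (fun lam => lam * alphaF p lam ^ p) (Set.Ioi 0) := by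
  have one_mul_int : ∀ a : ℝ, IntegrableOn
      (fun t : ℝ => Real.exp (-a * t ^ p - t ^ 2)) (Set.Ioi 0) → True := fun _ _ => trivial
  constructor
  · intro a ha b hb hab
    simp only [alphaF]
    apply mul_le_mul_of_nonneg_left _ (by norm_num)
    have hia := integ_aux p a 1 hp (le_of_lt ha) one_pos
    have hib := integ_aux p b 1 hp (le_of_lt hb) one_pos
    simp only [one_mul] at hia hib
    apply setIntegral_mono_on hib hia measurableSet_Ioi
    intro t ht
    apply Real.exp_le_exp.mpr
    have htp : 0 ≤ t ^ p := Real.rpow_nonneg (le_of_lt ht) p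
    nlinarith
  · intro a ha b hb hab
    have ha' : (0 : ℝ) < a := ha
    have hb' : (0 : ℝ) < b := hb
    have key : ∀ lam : ℝ, 0 < lam → lam * alphaF p lam ^ p =
        (2 * ∫ t in Set.Ioi (0 : ℝ),
          Real.exp (-1 * t ^ p - lam ^ (-(2 * p⁻¹)) * t ^ 2)) ^ p := by
      intro lam hlam
      have hG : 0 ≤ 2 * ∫ t in Set.Ioi (0 : ℝ),
          Real.exp (-1 * t ^ p - lam ^ (-(2 * p⁻¹)) * t ^ 2) := by
        have := int_nonneg p 1 (lam ^ (-(2 * p⁻¹)))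
        linarith
      rw [alphaF_eq p lam hp hlam,
        Real.mul_rpow (Real.rpow_nonneg hlam.le _) hG,
        ← Real.rpow_mul hlam.le, neg_mul, inv_mul_cancel₀ hp.ne',
        Real.rpow_neg_one, ← mul_assoc, mul_inv_cancel₀ hlam.ne', one_mul]
    simp only
    rw [key a ha', key b hb']
    have hGa : 0 ≤ 2 * ∫ t in Set.Ioi (0 : ℝ),
        Real.exp (-1 * t ^ p - a ^ (-(2 * p⁻¹)) * t ^ 2) := by
      have := int_nonneg p 1 (a ^ (-(2 * p⁻¹)))
      linarith
    apply Real.rpow_le_rpow hGa _ hp.le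
    apply mul_le_mul_of_nonneg_left _ (by norm_num)
    have hia := integ_aux p 1 (a ^ (-(2 * p⁻¹))) hp one_pos.le
      (Real.rpow_pos_of_pos ha' _)
    have hib := integ_aux p 1 (b ^ (-(2 * p⁻¹))) hp one_pos.le
      (Real.rpow_pos_of_pos hb' _)
    apply setIntegral_mono_on hia hib measurableSet_Ioi
    intro t ht
    apply Real.exp_le_exp.mpr
    have hcoef : b ^ (-(2 * p⁻¹)) ≤ a ^ (-(2 * p⁻¹)) :=
      Real.rpow_le_rpow_of_nonpos ha' hab (neg_nonpos.mpr (by positivity))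
    have ht2 : 0 ≤ t ^ 2 := sq_nonneg t
    nlinarith
end

section
/- Let λ > 0 and 0 < p < q < ∞. Define α(p,λ) = 2∫_0^∞ e^{-λ t^p - t^2} dt. Then α(p, λ/Γ((p+1)/2)) < α(q, λ/Γ((q+1)/2)). -/
open MeasureTheory

open Real Set in
private lemma aux17_exp {x y m : ℝ} (h : (y ≤ x ∧ x ≤ m) ∨ (m ≤ x ∧ x ≤ y)) :
    Real.exp (-m) * (x - y) ≤ Real.exp (-y) - Real.exp (-x) := by
  have h1 : Real.exp (-x) * (x - y) ≤ Real.exp (-y) - Real.exp (-x) := by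
    have h2 := Real.add_one_le_exp (x - y)
    have hx := Real.exp_pos (-x)
    have h3 : Real.exp (-x) * ((x - y) + 1) ≤ Real.exp (-x) * Real.exp (x - y) := by
      nlinarith
    rw [← Real.exp_add] at h3
    have hxy : -x + (x - y) = -y := by ring
    rw [hxy] at h3
    nlinarith
  rcases h with ⟨hyx, hxm⟩ | ⟨hmx, hxy⟩
  · have hh : Real.exp (-m) ≤ Real.exp (-x) := Real.exp_le_exp.2 (by linarith)
    nlinarith
  · have hh : Real.exp (-x) ≤ Real.exp (-m) := Real.exp_le_exp.2 (by linarith)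
    nlinarith

open Real Set in
private lemma aux17_exp_strict {x y m : ℝ} (h : (y ≤ x ∧ x ≤ m) ∨ (m ≤ x ∧ x ≤ y))
    (hne : x ≠ y) :
    Real.exp (-m) * (x - y) < Real.exp (-y) - Real.exp (-x) := by
  have h1 : Real.exp (-x) * (x - y) < Real.exp (-y) - Real.exp (-x) := by
    have h2 := Real.add_one_lt_exp (x := x - y) (sub_ne_zero.2 hne)
    have hx := Real.exp_pos (-x)
    have h3 : Real.exp (-x) * ((x - y) + 1) < Real.exp (-x) * Real.exp (x - y) := by
      nlinarith
    rw [← Real.exp_add] at h3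
    have hxy : -x + (x - y) = -y := by ring
    rw [hxy] at h3
    nlinarith
  rcases h with ⟨hyx, hxm⟩ | ⟨hmx, hxy⟩
  · have hh : Real.exp (-m) ≤ Real.exp (-x) := Real.exp_le_exp.2 (by linarith)
    nlinarith
  · have hh : Real.exp (-x) ≤ Real.exp (-m) := Real.exp_le_exp.2 (by linarith)
    nlinarith

open Real Set in
private lemma aux17_moment {r : ℝ} (hr : 0 < r) :
    ∫ t in Set.Ioi (0 : ℝ), t ^ r * Real.exp (-t ^ 2) = Real.Gamma ((r + 1) / 2) / 2 := by
  have h := integral_rpow_mul_exp_neg_rpow (p := 2) (q := r) two_pos (by linarith)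
  rw [show (1/(2:ℝ)) * Real.Gamma ((r+1)/2) = Real.Gamma ((r+1)/2) / 2 by ring] at h
  rw [← h]
  refine setIntegral_congr_fun measurableSet_Ioi (fun t ht => ?_)
  rw [show ((2:ℝ)) = ((2:ℕ):ℝ) by norm_num, Real.rpow_natCast]

open Real Set in
private lemma aux17_moment_int {r : ℝ} (hr : 0 < r) :
    IntegrableOn (fun t => t ^ r * Real.exp (-t ^ 2)) (Set.Ioi (0:ℝ)) := by
  have h := integrableOn_rpow_mul_exp_neg_mul_sq (b := 1) one_pos (s := r) (by linarith)
  simpa using h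

open Real Set in
private lemma aux17_int {c : ℝ} (hc : 0 ≤ c) (r : ℝ) :
    IntegrableOn (fun t => Real.exp (-(c * t ^ r) - t ^ 2)) (Set.Ioi (0:ℝ)) := by
  have hig : IntegrableOn (fun t : ℝ => Real.exp (-t ^ 2)) (Set.Ioi (0:ℝ)) := by
    have := (integrable_exp_neg_mul_sq (b := 1) one_pos).integrableOn (s := Set.Ioi (0:ℝ))
    simpa using this
  refine Integrable.mono' hig ?_ ?_
  · apply Measurable.aestronglyMeasurable
    fun_prop
  · rw [ae_restrict_iff' measurableSet_Ioi]
    filter_upwards with t ht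
    rw [Real.norm_eq_abs, abs_of_pos (Real.exp_pos _)]
    apply Real.exp_le_exp.2
    have h0 : 0 ≤ c * t ^ r := mul_nonneg hc (Real.rpow_nonneg (le_of_lt ht) r)
    linarith

theorem stmt17 (lam p q : ℝ) (hlam : 0 < lam) (hp : 0 < p) (hpq : p < q) :
    2 * ∫ t in Set.Ioi (0 : ℝ),
        Real.exp (-(lam / Real.Gamma ((p + 1) / 2)) * t ^ p - t ^ 2) <
    2 * ∫ t in Set.Ioi (0 : ℝ),
        Real.exp (-(lam / Real.Gamma ((q + 1) / 2)) * t ^ q - t ^ 2) := by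
  classical
  have hq : 0 < q := lt_trans hp hpq
  set Γp := Real.Gamma ((p + 1) / 2) with hΓpdef
  set Γq := Real.Gamma ((q + 1) / 2) with hΓqdef
  have hΓp : 0 < Γp := Real.Gamma_pos_of_pos (by linarith)
  have hΓq : 0 < Γq := Real.Gamma_pos_of_pos (by linarith)
  set a := lam / Γp with hadef
  set b := lam / Γq with hbdef
  have ha : 0 < a := div_pos hlam hΓp
  have hb : 0 < b := div_pos hlam hΓq
  simp only [neg_mul]
  have hqp : 0 < q - p := by linarith
  set t0 : ℝ := (a / b) ^ (q - p)⁻¹ with ht0def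
  have ht0 : 0 < t0 := Real.rpow_pos_of_pos (div_pos ha hb) _
  have ht0key : t0 ^ (q - p) = a / b := by
    rw [ht0def, ← Real.rpow_mul (le_of_lt (div_pos ha hb)),
      inv_mul_cancel₀ (ne_of_gt hqp), Real.rpow_one]
  -- splitting of powers
  have hsplit : ∀ t : ℝ, 0 < t → t ^ q = t ^ (q - p) * t ^ p := by
    intro t ht
    rw [← Real.rpow_add ht]
    congr 1
    ring
  set m : ℝ := a * t0 ^ p with hmdef
  -- pointwise comparison hypothesis
  have hcase : ∀ t : ℝ, 0 < t →
      (b * t ^ q ≤ a * t ^ p ∧ a * t ^ p ≤ m) ∨ (m ≤ a * t ^ p ∧ a * t ^ p ≤ b * t ^ q) := by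
    intro t ht
    rcases le_or_gt t t0 with hle | hlt
    · left
      constructor
      · have h1 : t ^ (q - p) ≤ t0 ^ (q - p) :=
          Real.rpow_le_rpow (le_of_lt ht) hle (le_of_lt hqp)
        rw [ht0key] at h1
        have h2 : t ^ (q - p) * b ≤ a := (le_div_iff₀ hb).1 h1
        have h3 : 0 ≤ t ^ p := Real.rpow_nonneg (le_of_lt ht) p
        calc b * t ^ q = (t ^ (q - p) * b) * t ^ p := by rw [hsplit t ht]; ring
          _ ≤ a * t ^ p := mul_le_mul_of_nonneg_right h2 h3
      · exact mul_le_mul_of_nonneg_left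
          (Real.rpow_le_rpow (le_of_lt ht) hle (le_of_lt hp)) (le_of_lt ha)
    · right
      constructor
      · exact mul_le_mul_of_nonneg_left
          (Real.rpow_le_rpow (le_of_lt ht0) (le_of_lt hlt) (le_of_lt hp)) (le_of_lt ha)
      · have h1 : t0 ^ (q - p) ≤ t ^ (q - p) :=
          Real.rpow_le_rpow (le_of_lt ht0) (le_of_lt hlt) (le_of_lt hqp)
        rw [ht0key] at h1
        have h2 : a ≤ t ^ (q - p) * b := by
          rw [div_le_iff₀ hb] at h1
          linarith
        have h3 : 0 ≤ t ^ p := Real.rpow_nonneg (le_of_lt ht) p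
        calc a * t ^ p ≤ (t ^ (q - p) * b) * t ^ p := mul_le_mul_of_nonneg_right h2 h3
          _ = b * t ^ q := by rw [hsplit t ht]; ring
  have hne : ∀ t : ℝ, 0 < t → t ≠ t0 → a * t ^ p ≠ b * t ^ q := by
    intro t ht htne
    rcases lt_or_gt_of_ne htne with hlt | hgt
    · -- t < t0 : b t^q < a t^p
      have h1 : t ^ (q - p) < t0 ^ (q - p) := Real.rpow_lt_rpow (le_of_lt ht) hlt hqp
      rw [ht0key] at h1
      have h2 : t ^ (q - p) * b < a := (lt_div_iff₀ hb).1 h1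
      have h3 : 0 < t ^ p := Real.rpow_pos_of_pos ht p
      have : b * t ^ q < a * t ^ p := by
        calc b * t ^ q = (t ^ (q - p) * b) * t ^ p := by rw [hsplit t ht]; ring
          _ < a * t ^ p := by exact mul_lt_mul_of_pos_right h2 h3
      exact (ne_of_gt this)
    · have h1 : t0 ^ (q - p) < t ^ (q - p) := Real.rpow_lt_rpow (le_of_lt ht0) hgt hqp
      rw [ht0key] at h1
      have h2 : a < t ^ (q - p) * b := by
        rw [div_lt_iff₀ hb] at h1
        linarith
      have h3 : 0 < t ^ p := Real.rpow_pos_of_pos ht p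
      have : a * t ^ p < b * t ^ q := by
        calc a * t ^ p < (t ^ (q - p) * b) * t ^ p := mul_lt_mul_of_pos_right h2 h3
          _ = b * t ^ q := by rw [hsplit t ht]; ring
      exact (ne_of_lt this)
  -- the discrepancy function
  set F : ℝ → ℝ := fun t =>
    Real.exp (-(b * t ^ q) - t ^ 2) - Real.exp (-(a * t ^ p) - t ^ 2) -
      Real.exp (-m) * ((a * t ^ p - b * t ^ q) * Real.exp (-t ^ 2)) with hFdef
  -- exp splitting
  have hexps : ∀ (c t : ℝ), Real.exp (-c - t ^ 2) = Real.exp (-c) * Real.exp (-t ^ 2) := by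
    intro c t
    rw [← Real.exp_add]
    congr 1
  -- pointwise nonnegativity / positivity
  have hFnonneg : ∀ t : ℝ, 0 < t → 0 ≤ F t := by
    intro t ht
    have key := aux17_exp (x := a * t ^ p) (y := b * t ^ q) (m := m) (hcase t ht)
    have key2 := mul_le_mul_of_nonneg_right key (le_of_lt (Real.exp_pos (-t ^ 2)))
    rw [hFdef]
    simp only []
    rw [hexps (b * t ^ q) t, hexps (a * t ^ p) t]
    nlinarith [Real.exp_pos (-t ^ 2)]
  have hFpos : ∀ t : ℝ, 0 < t → t ≠ t0 → 0 < F t := by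
    intro t ht htne
    have key := aux17_exp_strict (x := a * t ^ p) (y := b * t ^ q) (m := m)
      (hcase t ht) (hne t ht htne)
    have key2 := mul_lt_mul_of_pos_right key (Real.exp_pos (-t ^ 2))
    rw [hFdef]
    simp only []
    rw [hexps (b * t ^ q) t, hexps (a * t ^ p) t]
    nlinarith [Real.exp_pos (-t ^ 2)]
  -- integrability
  have hIp : IntegrableOn (fun t => Real.exp (-(a * t ^ p) - t ^ 2)) (Set.Ioi (0:ℝ)) :=
    aux17_int (le_of_lt ha) p
  have hIq : IntegrableOn (fun t => Real.exp (-(b * t ^ q) - t ^ 2)) (Set.Ioi (0:ℝ)) :=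
    aux17_int (le_of_lt hb) q
  have hMp := aux17_moment_int hp
  have hMq := aux17_moment_int hq
  have hMeq : (fun t : ℝ => (a * t ^ p - b * t ^ q) * Real.exp (-t ^ 2)) =
      fun t => a * (t ^ p * Real.exp (-t ^ 2)) - b * (t ^ q * Real.exp (-t ^ 2)) := by
    funext t; ring
  have hM : IntegrableOn (fun t : ℝ => (a * t ^ p - b * t ^ q) * Real.exp (-t ^ 2))
      (Set.Ioi (0:ℝ)) := by
    rw [hMeq]
    exact (hMp.const_mul a).sub (hMq.const_mul b)
  have hMval : (∫ t in Set.Ioi (0:ℝ), (a * t ^ p - b * t ^ q) * Real.exp (-t ^ 2)) = 0 := by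
    rw [hMeq, integral_sub (hMp.const_mul a) (hMq.const_mul b),
      integral_const_mul, integral_const_mul, aux17_moment hp, aux17_moment hq]
    rw [hadef, hbdef]
    field_simp
    rw [← hΓpdef, ← hΓqdef]; ring
  have hsub2 : IntegrableOn (fun t => Real.exp (-(b * t ^ q) - t ^ 2) -
      Real.exp (-(a * t ^ p) - t ^ 2)) (Set.Ioi (0:ℝ)) := hIq.sub hIp
  have hCin : IntegrableOn (fun t : ℝ =>
      Real.exp (-m) * ((a * t ^ p - b * t ^ q) * Real.exp (-t ^ 2))) (Set.Ioi (0:ℝ)) :=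
    hM.const_mul _
  have hF : IntegrableOn F (Set.Ioi (0:ℝ)) := hsub2.sub hCin
  have hFval : (∫ t in Set.Ioi (0:ℝ), F t) =
      (∫ t in Set.Ioi (0:ℝ), Real.exp (-(b * t ^ q) - t ^ 2)) -
      (∫ t in Set.Ioi (0:ℝ), Real.exp (-(a * t ^ p) - t ^ 2)) := by
    rw [hFdef]
    rw [integral_sub hsub2 hCin, integral_sub hIq hIp,
      integral_const_mul, hMval, mul_zero, sub_zero]
  have hintpos : 0 < ∫ t in Set.Ioi (0:ℝ), F t := by
    have hae : 0 ≤ᵐ[volume.restrict (Set.Ioi (0:ℝ))] F := by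
      rw [Filter.EventuallyLE, ae_restrict_iff' measurableSet_Ioi]
      filter_upwards with t ht
      exact hFnonneg t ht
    refine (setIntegral_pos_iff_support_of_nonneg_ae hae hF).2 ?_
    have hsub : Set.Ioi t0 ⊆ Function.support F ∩ Set.Ioi 0 := by
      intro t ht
      have ht' : 0 < t := lt_trans ht0 ht
      exact ⟨ne_of_gt (hFpos t ht' (ne_of_gt ht)), ht'⟩
    have : (volume : Measure ℝ) (Set.Ioi t0) ≤ volume (Function.support F ∩ Set.Ioi 0) :=
      measure_mono hsub
    rw [Real.volume_Ioi] at this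
    exact lt_of_lt_of_le (by norm_num) this
  linarith [hFval ▸ hintpos]
end

section
/- Let 1 ≤ p ≤ 2 and let g have density t ↦ e^{-|t|^p}/(2Γ(1+1/p)). Then for every q ≥ 1, (E|g|^q)^{1/q} ≤ C q^{1/p} for an absolute constant C (independent of p, q); more precisely (E|g|^q)^{1/q} = [Γ((q+1)/p+1)/((q+1)Γ(1/p+1))]^{1/q} ≤ C q^{1/p}. -/
open Real MeasureTheory Set

/-- Lower bound `Γ s ≥ e⁻¹` for `s ≥ 1`. -/
lemma gamma_lb {s : ℝ} (hs : 1 ≤ s) : Real.exp (-1) ≤ Real.Gamma s := by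
  have hs0 : (0:ℝ) < s := by linarith
  rw [Real.Gamma_eq_integral hs0]
  have hint : IntegrableOn (fun x : ℝ => Real.exp (-x) * x ^ (s - 1)) (Ioi 0) :=
    Real.GammaIntegral_convergent hs0
  have h1 : Real.exp (-1) = ∫ x in Ioi (1:ℝ), Real.exp (-x) := (integral_exp_neg_Ioi 1).symm
  rw [h1]
  have step1 : (∫ x in Ioi (1:ℝ), Real.exp (-x)) ≤
      ∫ x in Ioi (1:ℝ), Real.exp (-x) * x ^ (s - 1) := by
    refine setIntegral_mono_on ?_ (hint.mono_set (Ioi_subset_Ioi zero_le_one))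
      measurableSet_Ioi (fun x hx => ?_)
    · simpa using exp_neg_integrableOn_Ioi (1:ℝ) one_pos
    · have hx1 : (1:ℝ) ≤ x := le_of_lt hx
      have h2 : (1:ℝ) ≤ x ^ (s - 1) := Real.one_le_rpow hx1 (by linarith)
      nlinarith [Real.exp_pos (-x)]
  refine step1.trans (setIntegral_mono_set hint ?_ (Ioi_subset_Ioi zero_le_one).eventuallyLE)
  filter_upwards [ae_restrict_mem measurableSet_Ioi] with x hx
  have : (0:ℝ) < x := hx
  positivity

/-- Upper bound `Γ x ≤ x ^ x` for `x ≥ 2`. -/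
lemma gamma_ub {x : ℝ} (hx : 2 ≤ x) : Real.Gamma x ≤ x ^ x := by
  set n : ℕ := ⌈x⌉₊ with hn
  have hx0 : (0:ℝ) < x := by linarith
  have hxn : x ≤ (n : ℝ) := Nat.le_ceil x
  have hn2 : 2 ≤ n := by
    have : (2:ℝ) ≤ (n:ℝ) := le_trans hx hxn
    exact_mod_cast this
  have h1 : Real.Gamma x ≤ Real.Gamma n := by
    refine Real.Gamma_strictMonoOn_Ici.monotoneOn (mem_Ici.mpr hx)
      (mem_Ici.mpr (by exact_mod_cast hn2)) hxn
  have hcastn : ((n:ℝ)) = ((n - 1 : ℕ) : ℝ) + 1 := by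
    have h : n - 1 + 1 = n := by omega
    exact_mod_cast (congrArg (Nat.cast : ℕ → ℝ) h).symm
  have h2 : Real.Gamma n = ((Nat.factorial (n - 1)) : ℝ) := by
    rw [hcastn, Real.Gamma_nat_eq_factorial]
  have h3 : ((Nat.factorial (n - 1) : ℕ) : ℝ) ≤ ((n-1 : ℕ) : ℝ) ^ ((n-1 : ℕ)) := by
    exact_mod_cast Nat.factorial_le_pow (n - 1)
  have hne1x : ((n - 1 : ℕ) : ℝ) ≤ x := by
    have h4 : (n : ℝ) < x + 1 := by exact_mod_cast Nat.ceil_lt_add_one hx0.le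
    linarith [hcastn]
  have h4 : ((n-1 : ℕ) : ℝ) ^ ((n-1 : ℕ)) ≤ x ^ x := by
    rw [← Real.rpow_natCast (((n:ℕ)-1 : ℕ) : ℝ) (n-1)]
    calc ((n-1 : ℕ) : ℝ) ^ ((n-1 : ℕ) : ℝ) ≤ x ^ ((n-1 : ℕ) : ℝ) := by
          apply Real.rpow_le_rpow (by positivity) hne1x (by positivity)
      _ ≤ x ^ x := by
          apply Real.rpow_le_rpow_of_exponent_le (by linarith) hne1x
  calc Real.Gamma x ≤ Real.Gamma n := h1
    _ = ((Nat.factorial (n-1)) : ℝ) := h2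
    _ ≤ _ := h3
    _ ≤ x ^ x := h4

theorem stmt19 :
    ∃ C : ℝ, 0 < C ∧ ∀ p q : ℝ, 1 ≤ p → p ≤ 2 → 1 ≤ q →
      (∫ t : ℝ, |t| ^ q * (Real.exp (-|t| ^ p) / (2 * Real.Gamma (1 + 1 / p)))) ^ (1 / q) =
        (Real.Gamma ((q + 1) / p + 1) / ((q + 1) * Real.Gamma (1 / p + 1))) ^ (1 / q) ∧
      (Real.Gamma ((q + 1) / p + 1) / ((q + 1) * Real.Gamma (1 / p + 1))) ^ (1 / q) ≤
        C * q ^ (1 / p) := by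
  refine ⟨Real.exp 10, Real.exp_pos 10, fun p q hp1 hp2 hq1 => ?_⟩
  have hp0 : (0:ℝ) < p := by linarith
  have hq0 : (0:ℝ) < q := by linarith
  have hΓp : 0 < Real.Gamma (1 / p + 1) := Real.Gamma_pos_of_pos (by positivity)
  have hΓq : 0 < Real.Gamma ((q + 1) / p) := Real.Gamma_pos_of_pos (by positivity)
  constructor
  · -- equality of bases
    congr 1
    have key : (∫ t : ℝ, |t| ^ q * (Real.exp (-|t| ^ p) / (2 * Real.Gamma (1 + 1 / p)))) =
        2 * ∫ t in Ioi (0:ℝ), t ^ q * (Real.exp (-t ^ p) / (2 * Real.Gamma (1 + 1 / p))) :=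
      integral_comp_abs (f := fun t => t ^ q * (Real.exp (-t ^ p) / (2 * Real.Gamma (1 + 1 / p))))
    rw [key]
    have : (∫ t in Ioi (0:ℝ), t ^ q * (Real.exp (-t ^ p) / (2 * Real.Gamma (1 + 1 / p)))) =
        (∫ t in Ioi (0:ℝ), t ^ q * Real.exp (-t ^ p)) / (2 * Real.Gamma (1 + 1 / p)) := by
      rw [← integral_div]
      congr 1 with t
      ring
    rw [this, integral_rpow_mul_exp_neg_rpow hp0 (by linarith)]
    have hG : Real.Gamma ((q + 1) / p + 1) = ((q + 1) / p) * Real.Gamma ((q + 1) / p) :=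
      Real.Gamma_add_one (by positivity)
    rw [hG]
    have hΓeq : Real.Gamma (1 + 1 / p) = Real.Gamma (1 / p + 1) := by rw [add_comm]
    rw [hΓeq]
    field_simp
  · -- the bound
    obtain ⟨x, hxdef⟩ : ∃ x : ℝ, x = (q + 1) / p + 1 := ⟨_, rfl⟩
    rw [← hxdef]
    have hx2 : 2 ≤ x := by
      have h : (1:ℝ) ≤ (q + 1) / p := by
        rw [le_div_iff₀ hp0]; linarith
      rw [hxdef]; linarith
    have hx3q : x ≤ 3 * q := by
      have h : (q + 1) / p ≤ q + 1 := by
        apply div_le_self (by linarith) hp1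
      rw [hxdef]; linarith
    have hq3 : (1:ℝ) ≤ 3 * q := by linarith
    -- denominator lower bound
    have hden : Real.exp (-1) * 2 ≤ (q + 1) * Real.Gamma (1 / p + 1) := by
      have h1 : Real.exp (-1) ≤ Real.Gamma (1 / p + 1) := by
        apply gamma_lb
        have : (0:ℝ) < 1/p := by positivity
        linarith
      have h2 : (2:ℝ) ≤ q + 1 := by linarith
      nlinarith [Real.exp_pos (-1)]
    have hdenpos : (0:ℝ) < (q + 1) * Real.Gamma (1 / p + 1) := by positivity
    -- step: fraction ≤ exp 1 * x ^ x
    have hfrac : Real.Gamma x / ((q + 1) * Real.Gamma (1 / p + 1)) ≤ Real.exp 1 * x ^ x := by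
      have hGx : Real.Gamma x ≤ x ^ x := gamma_ub hx2
      have hGx0 : 0 < Real.Gamma x := Real.Gamma_pos_of_pos (by linarith)
      rw [div_le_iff₀ hdenpos]
      have h1 : Real.Gamma x ≤ Real.exp 1 * x ^ x * (Real.exp (-1) * 2) := by
        have : Real.exp 1 * Real.exp (-1) = 1 := by
          rw [← Real.exp_add]; norm_num
        nlinarith [Real.rpow_natCast x 0]
      calc Real.Gamma x ≤ Real.exp 1 * x ^ x * (Real.exp (-1) * 2) := h1
        _ ≤ Real.exp 1 * x ^ x * ((q + 1) * Real.Gamma (1 / p + 1)) := by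
            have hxx : (0:ℝ) ≤ x ^ x := Real.rpow_nonneg (by linarith) x
            have he : (0:ℝ) < Real.exp 1 := Real.exp_pos 1
            have hx0 : (0:ℝ) ≤ x := by linarith
            have : (0:ℝ) ≤ Real.exp 1 * x ^ x := by positivity
            exact mul_le_mul_of_nonneg_left hden this
    -- x ^ x ≤ (3q) ^ x
    have hxx : x ^ x ≤ (3 * q) ^ x :=
      Real.rpow_le_rpow (by linarith) hx3q (by linarith)
    have hfrac2 : Real.Gamma x / ((q + 1) * Real.Gamma (1 / p + 1)) ≤
        Real.exp 1 * (3 * q) ^ x := by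
      refine hfrac.trans ?_
      exact mul_le_mul_of_nonneg_left hxx (Real.exp_pos 1).le
    -- take 1/q powers
    have hbase0 : 0 ≤ Real.Gamma x / ((q + 1) * Real.Gamma (1 / p + 1)) := by
      have : 0 < Real.Gamma x := Real.Gamma_pos_of_pos (by linarith)
      positivity
    have hpow : (Real.Gamma x / ((q + 1) * Real.Gamma (1 / p + 1))) ^ (1/q) ≤
        (Real.exp 1 * (3 * q) ^ x) ^ (1/q) :=
      Real.rpow_le_rpow hbase0 hfrac2 (by positivity)
    refine hpow.trans ?_
    have h3q0 : (0:ℝ) < 3 * q := by linarith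
    rw [Real.mul_rpow (Real.exp_pos 1).le (Real.rpow_nonneg h3q0.le x),
      ← Real.rpow_mul h3q0.le]
    -- bound exp 1 ^ (1/q) ≤ exp 1
    have he1 : Real.exp 1 ^ (1/q) ≤ Real.exp 1 := by
      rw [Real.exp_one_rpow]
      exact Real.exp_le_exp.mpr (by rw [div_le_one hq0]; linarith)
    -- bound (3q) ^ (x/q) ≤ (3q)^(1/p) * exp 6
    have hexp_le : x * (1/q) ≤ 1/p + 2/q := by
      have h1 : x * (1/q) = 1/p + 1/(p*q) + 1/q := by
        rw [hxdef]; field_simp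
      have h2 : 1/(p*q) ≤ 1/q := by
        apply div_le_div_of_nonneg_left (by norm_num) hq0
        nlinarith
      have h3 : 2/q = 1/q + 1/q := by ring
      linarith [h1.le]
    have hsplit : (3*q) ^ (x * (1/q)) ≤ (3*q) ^ ((1:ℝ)/p + 2/q) :=
      Real.rpow_le_rpow_of_exponent_le hq3 hexp_le
    have hsplit2 : (3*q) ^ ((1:ℝ)/p + 2/q) = (3*q) ^ ((1:ℝ)/p) * (3*q) ^ ((2:ℝ)/q) :=
      Real.rpow_add h3q0 _ _
    -- (3q)^(2/q) ≤ exp 6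
    have hlog : Real.log (3*q) ≤ 3*q := by
      have := Real.log_le_sub_one_of_pos h3q0
      linarith
    have h2q : (3*q) ^ ((2:ℝ)/q) ≤ Real.exp 6 := by
      rw [Real.rpow_def_of_pos h3q0]
      apply Real.exp_le_exp.mpr
      have : Real.log (3*q) * (2/q) ≤ (3*q) * (2/q) := by
        apply mul_le_mul_of_nonneg_right hlog (by positivity)
      calc Real.log (3*q) * (2/q) ≤ (3*q) * (2/q) := this
        _ = 6 := by field_simp; ring
    -- (3q)^(1/p) ≤ 3 * q^(1/p)
    have h3q1p : (3*q) ^ ((1:ℝ)/p) ≤ 3 * q ^ ((1:ℝ)/p) := by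
      rw [Real.mul_rpow (by norm_num) hq0.le]
      have : (3:ℝ) ^ ((1:ℝ)/p) ≤ 3 := by
        calc (3:ℝ) ^ ((1:ℝ)/p) ≤ (3:ℝ) ^ (1:ℝ) := by
              apply Real.rpow_le_rpow_of_exponent_le (by norm_num)
              rw [div_le_one hp0]; linarith
          _ = 3 := Real.rpow_one 3
      exact mul_le_mul_of_nonneg_right this (Real.rpow_nonneg hq0.le _)
    -- assemble
    have hq1p0 : (0:ℝ) ≤ q ^ ((1:ℝ)/p) := Real.rpow_nonneg hq0.le _
    have hfin : Real.exp 1 ^ (1/q) * (3*q) ^ (x * (1/q)) ≤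
        Real.exp 1 * (3 * q ^ ((1:ℝ)/p) * Real.exp 6) := by
      have hA : (3*q) ^ (x * (1/q)) ≤ 3 * q ^ ((1:ℝ)/p) * Real.exp 6 := by
        calc (3*q) ^ (x * (1/q)) ≤ (3*q) ^ ((1:ℝ)/p) * (3*q) ^ ((2:ℝ)/q) := by
              rw [← hsplit2]; exact hsplit
          _ ≤ (3 * q ^ ((1:ℝ)/p)) * Real.exp 6 := by
              apply mul_le_mul h3q1p h2q (Real.rpow_nonneg h3q0.le _) (by positivity)
      have hB : (0:ℝ) ≤ (3*q) ^ (x * (1/q)) := Real.rpow_nonneg h3q0.le _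
      have hC : (0:ℝ) ≤ Real.exp 1 ^ (1/q) := Real.rpow_nonneg (Real.exp_pos 1).le _
      calc Real.exp 1 ^ (1/q) * (3*q) ^ (x * (1/q)) ≤ Real.exp 1 * (3*q) ^ (x * (1/q)) :=
            mul_le_mul_of_nonneg_right he1 hB
        _ ≤ Real.exp 1 * (3 * q ^ ((1:ℝ)/p) * Real.exp 6) :=
            mul_le_mul_of_nonneg_left hA (Real.exp_pos 1).le
    refine hfin.trans ?_
    -- exp 1 * (3 * q^(1/p) * exp 6) ≤ exp 10 * q^(1/p)
    have h3e : (3:ℝ) ≤ Real.exp 3 := by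
      have := Real.add_one_le_exp (3:ℝ)
      linarith
    have hfinal : Real.exp 1 * (3 * Real.exp 6) ≤ Real.exp 10 := by
      have h1 : Real.exp 1 * (3 * Real.exp 6) ≤ Real.exp 1 * (Real.exp 3 * Real.exp 6) :=
        mul_le_mul_of_nonneg_left
          (mul_le_mul_of_nonneg_right h3e (Real.exp_pos 6).le) (Real.exp_pos 1).le
      have h2 : Real.exp 1 * (Real.exp 3 * Real.exp 6) = Real.exp 10 := by
        rw [← Real.exp_add, ← Real.exp_add]; norm_num
      linarith
    calc Real.exp 1 * (3 * q ^ ((1:ℝ)/p) * Real.exp 6)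
          = (Real.exp 1 * (3 * Real.exp 6)) * q ^ ((1:ℝ)/p) := by ring
      _ ≤ Real.exp 10 * q ^ ((1:ℝ)/p) := mul_le_mul_of_nonneg_right hfinal hq1p0
      _ = Real.exp 10 * q ^ (1/p) := by norm_num
end
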